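/- arXiv:1711.02394 — 4 statements merged into one kernel-verified Lean document; each statement's English description precedes it below -/
import Mathlib

section
/- Let G be a connected graph obtained from connected graphs G_0 and G_1 by identifying a vertex of G_0 with a vertex of G_1 into a single common vertex u (so V(G_0) ∩ V(G_1) = {u} and every edge of G lies in G_0 or in G_1). Then for every edge e = w₁w₂ of G_0 and each i ∈ {1,2}: n_{w_i}(e|G) = n_{w_i}(e|G_0) + δ(u)·(|V(G_1)| − 1) and m_{w_i}(e|G) = m_{w_i}(e|G_0) + δ(u)·|E(G_1)|, where δ(u) = 1 if d_{G_0}(w_i, u) < d_{G_0}(w_{3−i}, u) and δ(u) = 0 otherwise. -/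
open SimpleGraph Finset
open scoped Classical

noncomputable section

variable {V : Type*}

/-- number of vertices strictly closer to `u` than to `v` -/
def szN (G : SimpleGraph V) (u v : V) : ℕ :=
  {w : V | G.dist u w < G.dist v w}.ncard

/-- distance from an edge (unordered pair) to a vertex -/
def eDist (G : SimpleGraph V) (e : Sym2 V) (w : V) : ℕ :=
  Sym2.lift ⟨fun x y => min (G.dist x w) (G.dist y w), fun x y => min_comm _ _⟩ e

/-- number of edges strictly closer to `u` than to `v` -/
def szM (G : SimpleGraph V) (u v : V) : ℕ :=
  {e : Sym2 V | e ∈ G.edgeSet ∧ eDist G e u < eDist G e v}.ncard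

/-- edge Szeged index -/
def szE [Fintype V] (G : SimpleGraph V) : ℕ :=
  ∑ e ∈ G.edgeFinset,
    Sym2.lift ⟨fun u v => szM G u v * szM G v u, fun u v => mul_comm _ _⟩ e

/-- edge-vertex Szeged index -/
def szEV [Fintype V] (G : SimpleGraph V) : ℚ :=
  (1/2) * ∑ e ∈ G.edgeFinset,
    Sym2.lift ⟨fun u v => ((szN G u v * szM G v u + szN G v u * szM G u v : ℕ) : ℚ),
      fun u v => by push_cast; ring⟩ e

/-- the graph obtained from `H₀` and `H₁` by identifying the vertex `u₀` of `H₀`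
with the vertex `u₁` of `H₁` into a single common vertex (represented by
`Sum.inl u₀`) -/
def glue {V₀ V₁ : Type*} (H₀ : SimpleGraph V₀) (H₁ : SimpleGraph V₁)
    (u₀ : V₀) (u₁ : V₁) : SimpleGraph (V₀ ⊕ {x : V₁ // x ≠ u₁}) where
  Adj a b :=
    match a, b with
    | Sum.inl x, Sum.inl y => H₀.Adj x y
    | Sum.inl x, Sum.inr y => x = u₀ ∧ H₁.Adj u₁ y.1
    | Sum.inr x, Sum.inl y => y = u₀ ∧ H₁.Adj u₁ x.1
    | Sum.inr x, Sum.inr y => H₁.Adj x.1 y.1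
  symm := by
    constructor
    rintro (x | x) (y | y) h
    · exact h.symm
    · exact h
    · exact h
    · exact h.symm
  loopless := by
    constructor
    rintro (x | x) h
    · exact H₀.irrefl h
    · exact H₁.irrefl h

section GlueAux

variable {V₀ V₁ : Type*} {H₀ : SimpleGraph V₀} {H₁ : SimpleGraph V₁} {u₀ : V₀} {u₁ : V₁}

/-- projection of glued vertices onto `V₀` -/
private def p0 (u₀ : V₀) : V₀ ⊕ {x : V₁ // x ≠ u₁} → V₀
  | Sum.inl x => x
  | Sum.inr _ => u₀

/-- projection of glued vertices onto `V₁` -/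
private def p1 : V₀ ⊕ {x : V₁ // x ≠ u₁} → V₁
  | Sum.inl _ => u₁
  | Sum.inr y => y.1

/-- inclusion of `V₁` into glued vertices -/
private def f1 (u₀ : V₀) (u₁ : V₁) (y : V₁) : V₀ ⊕ {x : V₁ // x ≠ u₁} :=
  if h : y = u₁ then Sum.inl u₀ else Sum.inr ⟨y, h⟩

private lemma f1_eq_inl : f1 u₀ u₁ u₁ = Sum.inl u₀ := dif_pos rfl

private lemma f1_eq_inr {y : V₁} (hy : y ≠ u₁) : f1 u₀ u₁ y = Sum.inr ⟨y, hy⟩ := dif_neg hy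

private lemma f1_inj : Function.Injective (f1 u₀ u₁ : V₁ → V₀ ⊕ {x : V₁ // x ≠ u₁}) := by
  intro a b h
  by_cases ha : a = u₁ <;> by_cases hb : b = u₁
  · rw [ha, hb]
  · rw [ha, f1_eq_inl, f1_eq_inr hb] at h
    exact absurd h (by simp)
  · rw [hb, f1_eq_inl, f1_eq_inr ha] at h
    exact absurd h (by simp)
  · rw [f1_eq_inr ha, f1_eq_inr hb] at h
    simpa using h

private def hom₀ (H₀ : SimpleGraph V₀) (H₁ : SimpleGraph V₁) (u₀ : V₀) (u₁ : V₁) :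
    H₀ →g glue H₀ H₁ u₀ u₁ := ⟨Sum.inl, fun h => h⟩

private def hom₁ (H₀ : SimpleGraph V₀) (H₁ : SimpleGraph V₁) (u₀ : V₀) (u₁ : V₁) :
    H₁ →g glue H₀ H₁ u₀ u₁ where
  toFun := f1 u₀ u₁
  map_rel' := by
    intro a b hab
    by_cases ha : a = u₁ <;> by_cases hb : b = u₁
    · exact absurd (ha ▸ hb ▸ hab) (H₁.irrefl)
    · rw [ha, f1_eq_inl, f1_eq_inr hb]
      exact ⟨rfl, ha ▸ hab⟩
    · rw [hb, f1_eq_inl, f1_eq_inr ha]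
      exact ⟨rfl, hb ▸ hab.symm⟩
    · rw [f1_eq_inr ha, f1_eq_inr hb]
      exact hab

private lemma proj_walks {a b : V₀ ⊕ {x : V₁ // x ≠ u₁}}
    (w : (glue H₀ H₁ u₀ u₁).Walk a b) :
    ∃ (w0 : H₀.Walk (p0 u₀ a) (p0 u₀ b)) (w1 : H₁.Walk (p1 a) (p1 b)),
      w0.length + w1.length = w.length := by
  induction w with
  | nil => exact ⟨.nil, .nil, rfl⟩
  | @cons a c b h q ih =>
    obtain ⟨w0, w1, hw⟩ := ih
    cases a with
    | inl x =>
      cases c with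
      | inl y =>
        exact ⟨.cons h w0, w1, by
          show w0.length + 1 + w1.length = q.length + 1; omega⟩
      | inr y =>
        exact ⟨w0.copy (h.1).symm rfl, .cons h.2 w1, by
          show (w0.copy _ _).length + (w1.length + 1) = q.length + 1
          erw [SimpleGraph.Walk.length_copy]; omega⟩
    | inr x =>
      cases c with
      | inl y =>
        exact ⟨w0.copy h.1 rfl, .cons (h.2).symm w1, by
          show (w0.copy _ _).length + (w1.length + 1) = q.length + 1
          erw [SimpleGraph.Walk.length_copy]; omega⟩
      | inr y =>
        exact ⟨w0, .cons h w1, by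
          show w0.length + (w1.length + 1) = q.length + 1; omega⟩

private lemma glue_dist_inl_inl (h₀ : H₀.Connected)
    (hG : (glue H₀ H₁ u₀ u₁).Connected) (x y : V₀) :
    (glue H₀ H₁ u₀ u₁).dist (Sum.inl x) (Sum.inl y) = H₀.dist x y := by
  apply le_antisymm
  · obtain ⟨p, hp⟩ := h₀.exists_walk_length_eq_dist x y
    calc (glue H₀ H₁ u₀ u₁).dist (Sum.inl x) (Sum.inl y)
        ≤ (p.map (hom₀ H₀ H₁ u₀ u₁)).length := SimpleGraph.dist_le _
      _ = H₀.dist x y := by rw [SimpleGraph.Walk.length_map, hp]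
  · obtain ⟨w, hwlen⟩ := hG.exists_walk_length_eq_dist (Sum.inl x) (Sum.inl y)
    obtain ⟨w0, w1, hw⟩ := proj_walks w
    calc H₀.dist x y ≤ w0.length := SimpleGraph.dist_le w0
      _ ≤ w.length := by omega
      _ = _ := hwlen

private lemma glue_dist_inl_inr (h₀ : H₀.Connected) (h₁ : H₁.Connected)
    (hG : (glue H₀ H₁ u₀ u₁).Connected) (x : V₀) (y : {x : V₁ // x ≠ u₁}) :
    (glue H₀ H₁ u₀ u₁).dist (Sum.inl x) (Sum.inr y) = H₀.dist x u₀ + H₁.dist u₁ y.1 := by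
  apply le_antisymm
  · obtain ⟨p, hp⟩ := h₀.exists_walk_length_eq_dist x u₀
    obtain ⟨q, hq⟩ := h₁.exists_walk_length_eq_dist u₁ y.1
    have e1 : (hom₁ H₀ H₁ u₀ u₁) u₁ = Sum.inl u₀ := f1_eq_inl
    have e2 : (hom₁ H₀ H₁ u₀ u₁) y.1 = Sum.inr y := f1_eq_inr y.2
    calc (glue H₀ H₁ u₀ u₁).dist (Sum.inl x) (Sum.inr y)
        ≤ ((p.map (hom₀ H₀ H₁ u₀ u₁)).append
            ((q.map (hom₁ H₀ H₁ u₀ u₁)).copy e1 e2)).length := SimpleGraph.dist_le _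
      _ = H₀.dist x u₀ + H₁.dist u₁ y.1 := by
          simp only [SimpleGraph.Walk.length_append, SimpleGraph.Walk.length_copy,
            SimpleGraph.Walk.length_map, SimpleGraph.Walk.length_map, hp, hq]
          erw [SimpleGraph.Walk.length_copy, SimpleGraph.Walk.length_map, hq]
  · obtain ⟨w, hwlen⟩ := hG.exists_walk_length_eq_dist (Sum.inl x) (Sum.inr y)
    obtain ⟨w0, w1, hw⟩ := proj_walks w
    have d0 : H₀.dist x u₀ ≤ w0.length := SimpleGraph.dist_le w0
    have d1 : H₁.dist u₁ y.1 ≤ w1.length := SimpleGraph.dist_le w1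
    omega

private lemma glue_dist_f1_inl (h₀ : H₀.Connected) (h₁ : H₁.Connected)
    (hG : (glue H₀ H₁ u₀ u₁).Connected) (a : V₁) (w : V₀) :
    (glue H₀ H₁ u₀ u₁).dist (f1 u₀ u₁ a) (Sum.inl w) = H₀.dist u₀ w + H₁.dist a u₁ := by
  by_cases ha : a = u₁
  · subst ha
    rw [f1_eq_inl, glue_dist_inl_inl h₀ hG, SimpleGraph.dist_self, add_zero,
      SimpleGraph.dist_comm]
  · rw [f1_eq_inr ha, SimpleGraph.dist_comm, glue_dist_inl_inr h₀ h₁ hG,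
      SimpleGraph.dist_comm (u := w) (v := u₀), SimpleGraph.dist_comm (u := u₁) (v := a)]

private lemma eDist_map_inl (h₀ : H₀.Connected)
    (hG : (glue H₀ H₁ u₀ u₁).Connected) (e : Sym2 V₀) (w : V₀) :
    eDist (glue H₀ H₁ u₀ u₁) (Sym2.map Sum.inl e) (Sum.inl w) = eDist H₀ e w := by
  induction e using Sym2.ind with
  | _ a b =>
    simp only [eDist, Sym2.map_pair_eq, Sym2.lift_mk, glue_dist_inl_inl h₀ hG]

private lemma eDist_map_f1 (h₀ : H₀.Connected) (h₁ : H₁.Connected)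
    (hG : (glue H₀ H₁ u₀ u₁).Connected) (e : Sym2 V₁) (w : V₀) :
    eDist (glue H₀ H₁ u₀ u₁) (Sym2.map (f1 u₀ u₁) e) (Sum.inl w) =
      H₀.dist u₀ w + eDist H₁ e u₁ := by
  induction e using Sym2.ind with
  | _ a b =>
    simp only [eDist, Sym2.map_pair_eq, Sym2.lift_mk,
      glue_dist_f1_inl h₀ h₁ hG]
    exact min_add_add_left (H₀.dist u₀ w) (H₁.dist a u₁) (H₁.dist b u₁)

private lemma mem_glue_edge_inl {e₀ : Sym2 V₀} (h : e₀ ∈ H₀.edgeSet) :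
    Sym2.map Sum.inl e₀ ∈ (glue H₀ H₁ u₀ u₁).edgeSet := by
  induction e₀ using Sym2.ind with
  | _ a b =>
    simp only [Sym2.map_pair_eq, SimpleGraph.mem_edgeSet] at h ⊢
    exact h

private lemma mem_glue_edge_f1 {e₁ : Sym2 V₁} (h : e₁ ∈ H₁.edgeSet) :
    Sym2.map (f1 u₀ u₁) e₁ ∈ (glue H₀ H₁ u₀ u₁).edgeSet := by
  induction e₁ using Sym2.ind with
  | _ a b =>
    simp only [Sym2.map_pair_eq, SimpleGraph.mem_edgeSet] at h ⊢
    exact (hom₁ H₀ H₁ u₀ u₁).map_adj h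

private lemma glue_edge_rep {e : Sym2 (V₀ ⊕ {x : V₁ // x ≠ u₁})}
    (he : e ∈ (glue H₀ H₁ u₀ u₁).edgeSet) :
    (∃ e₀ ∈ H₀.edgeSet, e = Sym2.map Sum.inl e₀) ∨
    (∃ e₁ ∈ H₁.edgeSet, e = Sym2.map (f1 u₀ u₁) e₁) := by
  induction e using Sym2.ind with
  | _ a b =>
    rw [SimpleGraph.mem_edgeSet] at he
    rcases a with x | x <;> rcases b with y | y
    · exact Or.inl ⟨s(x, y), he, by simp⟩
    · obtain ⟨h1, h2⟩ := he
      refine Or.inr ⟨s(u₁, y.1), h2, ?_⟩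
      rw [h1, Sym2.map_pair_eq, f1_eq_inl, f1_eq_inr y.2]
    · obtain ⟨h1, h2⟩ := he
      refine Or.inr ⟨s(u₁, x.1), h2, ?_⟩
      rw [h1, Sym2.map_pair_eq, f1_eq_inl, f1_eq_inr x.2, Sym2.eq_swap]
    · exact Or.inr ⟨s(x.1, y.1), he, by
        rw [Sym2.map_pair_eq, f1_eq_inr x.2, f1_eq_inr y.2]⟩

private lemma disj_images (A : Set (Sym2 V₀)) {B : Set (Sym2 V₁)} (hB : B ⊆ H₁.edgeSet) :
    Disjoint (Sym2.map Sum.inl '' A) (Sym2.map (f1 u₀ u₁) '' B) := by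
  rw [Set.disjoint_left]
  rintro e ⟨e₀, -, rfl⟩ ⟨e₁, he₁, heq⟩
  obtain ⟨a, b, rfl⟩ : ∃ a b, e₁ = s(a, b) := by
    induction e₁ using Sym2.ind with | _ a b => exact ⟨a, b, rfl⟩
  have hadj : H₁.Adj a b := (SimpleGraph.mem_edgeSet H₁).mp (hB he₁)
  have hab : a ≠ b := hadj.ne
  have : ∃ c : V₁, c ≠ u₁ ∧ c ∈ (s(a, b) : Sym2 V₁) := by
    by_cases ha : a = u₁
    · exact ⟨b, fun hb => hab (ha.trans hb.symm), by simp⟩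
    · exact ⟨a, ha, by simp⟩
  obtain ⟨c, hc, hcmem⟩ := this
  have hmem : f1 u₀ u₁ c ∈ Sym2.map (f1 u₀ u₁) s(a, b) :=
    Sym2.mem_map.mpr ⟨c, hcmem, rfl⟩
  rw [heq] at hmem
  obtain ⟨d, -, hd⟩ := Sym2.mem_map.mp hmem
  rw [f1_eq_inr hc] at hd
  exact Sum.inl_ne_inr hd

private lemma card_subtype_ne [Fintype V₁] :
    Nat.card {x : V₁ // x ≠ u₁} = Fintype.card V₁ - 1 := by
  rw [Nat.card_eq_fintype_card]
  have h := Fintype.card_subtype_compl (fun x : V₁ => x = u₁)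
  simp only [Fintype.card_subtype_eq] at h
  convert h using 2

private lemma szN_glue [Fintype V₀] [Fintype V₁] (h₀ : H₀.Connected) (h₁ : H₁.Connected)
    (hG : (glue H₀ H₁ u₀ u₁).Connected) (w₁ w₂ : V₀) :
    szN (glue H₀ H₁ u₀ u₁) (Sum.inl w₁) (Sum.inl w₂) =
      szN H₀ w₁ w₂ +
        (if H₀.dist w₁ u₀ < H₀.dist w₂ u₀ then 1 else 0) * (Fintype.card V₁ - 1) := by
  by_cases hδ : H₀.dist w₁ u₀ < H₀.dist w₂ u₀
  · rw [if_pos hδ, one_mul]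
    have hset : {w | (glue H₀ H₁ u₀ u₁).dist (Sum.inl w₁) w <
          (glue H₀ H₁ u₀ u₁).dist (Sum.inl w₂) w} =
        Sum.inl '' {x | H₀.dist w₁ x < H₀.dist w₂ x} ∪
          Sum.inr '' (Set.univ : Set {x : V₁ // x ≠ u₁}) := by
      ext w
      rcases w with x | y
      · simp [glue_dist_inl_inl h₀ hG]
      · simp only [Set.mem_setOf_eq, glue_dist_inl_inr h₀ h₁ hG, Set.mem_union,
          Set.mem_image, Set.mem_univ]
        constructor
        · intro _
          exact Or.inr ⟨y, trivial, rfl⟩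
        · intro _
          omega
    rw [szN, hset, Set.ncard_union_eq (by
        rw [Set.disjoint_left]
        rintro e ⟨x, -, rfl⟩ ⟨y, -, h⟩
        exact Sum.inr_ne_inl h),
      Set.ncard_image_of_injective _ Sum.inl_injective,
      Set.ncard_image_of_injective _ Sum.inr_injective, Set.ncard_univ]
    rw [szN, card_subtype_ne]
  · rw [if_neg hδ, zero_mul, add_zero]
    have hset : {w | (glue H₀ H₁ u₀ u₁).dist (Sum.inl w₁) w <
          (glue H₀ H₁ u₀ u₁).dist (Sum.inl w₂) w} =
        Sum.inl '' {x | H₀.dist w₁ x < H₀.dist w₂ x} := by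
      ext w
      rcases w with x | y
      · simp [glue_dist_inl_inl h₀ hG]
      · simp only [Set.mem_setOf_eq, glue_dist_inl_inr h₀ h₁ hG, Set.mem_image]
        constructor
        · intro h
          omega
        · rintro ⟨x, -, h⟩
          exact absurd h Sum.inl_ne_inr
    rw [szN, hset, Set.ncard_image_of_injective _ Sum.inl_injective, szN]

private lemma szM_glue [Fintype V₀] [Fintype V₁] (h₀ : H₀.Connected) (h₁ : H₁.Connected)
    (hG : (glue H₀ H₁ u₀ u₁).Connected) (w₁ w₂ : V₀) :
    szM (glue H₀ H₁ u₀ u₁) (Sum.inl w₁) (Sum.inl w₂) =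
      szM H₀ w₁ w₂ +
        (if H₀.dist w₁ u₀ < H₀.dist w₂ u₀ then 1 else 0) * H₁.edgeFinset.card := by
  have hc : H₀.dist u₀ w₁ = H₀.dist w₁ u₀ := SimpleGraph.dist_comm
  have hc' : H₀.dist u₀ w₂ = H₀.dist w₂ u₀ := SimpleGraph.dist_comm
  by_cases hδ : H₀.dist w₁ u₀ < H₀.dist w₂ u₀
  · rw [if_pos hδ, one_mul]
    have hset : {e | e ∈ (glue H₀ H₁ u₀ u₁).edgeSet ∧
          eDist (glue H₀ H₁ u₀ u₁) e (Sum.inl w₁) < eDist (glue H₀ H₁ u₀ u₁) e (Sum.inl w₂)} =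
        Sym2.map Sum.inl '' {e | e ∈ H₀.edgeSet ∧ eDist H₀ e w₁ < eDist H₀ e w₂} ∪
          Sym2.map (f1 u₀ u₁) '' H₁.edgeSet := by
      apply Set.Subset.antisymm
      · rintro e ⟨hmem, hlt⟩
        rcases glue_edge_rep hmem with ⟨e₀, he₀, rfl⟩ | ⟨e₁, he₁, rfl⟩
        · exact Or.inl ⟨e₀, ⟨he₀, by
            rwa [eDist_map_inl h₀ hG, eDist_map_inl h₀ hG] at hlt⟩, rfl⟩
        · exact Or.inr ⟨e₁, he₁, rfl⟩
      · rintro e (⟨e₀, ⟨he₀, hlt⟩, rfl⟩ | ⟨e₁, he₁, rfl⟩)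
        · exact ⟨mem_glue_edge_inl he₀, by
            rw [eDist_map_inl h₀ hG, eDist_map_inl h₀ hG]; exact hlt⟩
        · refine ⟨mem_glue_edge_f1 he₁, ?_⟩
          rw [eDist_map_f1 h₀ h₁ hG, eDist_map_f1 h₀ h₁ hG]
          omega
    rw [szM, hset,
      Set.ncard_union_eq (disj_images _ le_rfl),
      Set.ncard_image_of_injective _ (Sym2.map.injective Sum.inl_injective),
      Set.ncard_image_of_injective _ (Sym2.map.injective f1_inj),
      szM, ← Set.ncard_coe_finset, SimpleGraph.coe_edgeFinset]
  · rw [if_neg hδ, zero_mul, add_zero]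
    have hset : {e | e ∈ (glue H₀ H₁ u₀ u₁).edgeSet ∧
          eDist (glue H₀ H₁ u₀ u₁) e (Sum.inl w₁) < eDist (glue H₀ H₁ u₀ u₁) e (Sum.inl w₂)} =
        Sym2.map Sum.inl '' {e | e ∈ H₀.edgeSet ∧ eDist H₀ e w₁ < eDist H₀ e w₂} := by
      apply Set.Subset.antisymm
      · rintro e ⟨hmem, hlt⟩
        rcases glue_edge_rep hmem with ⟨e₀, he₀, rfl⟩ | ⟨e₁, he₁, rfl⟩
        · exact ⟨e₀, ⟨he₀, by
            rwa [eDist_map_inl h₀ hG, eDist_map_inl h₀ hG] at hlt⟩, rfl⟩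
        · rw [eDist_map_f1 h₀ h₁ hG, eDist_map_f1 h₀ h₁ hG] at hlt
          omega
      · rintro e ⟨e₀, ⟨he₀, hlt⟩, rfl⟩
        exact ⟨mem_glue_edge_inl he₀, by
          rw [eDist_map_inl h₀ hG, eDist_map_inl h₀ hG]; exact hlt⟩
    rw [szM, hset,
      Set.ncard_image_of_injective _ (Sym2.map.injective Sum.inl_injective), szM]

end GlueAux

/-- Let `G` be the connected graph obtained from connected graphs `G₀`, `G₁` by
identifying a vertex of `G₀` with a vertex of `G₁` into a common vertex `u`.
Then for every edge `e = w₁w₂` of `G₀` and each `i ∈ {1,2}`,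
`n_{wᵢ}(e|G) = n_{wᵢ}(e|G₀) + δ(u)(|V(G₁)| - 1)` and
`m_{wᵢ}(e|G) = m_{wᵢ}(e|G₀) + δ(u)|E(G₁)|`, where `δ(u) = 1` if `u` is strictly
closer to `wᵢ` than to the other endpoint in `G₀`, and `δ(u) = 0` otherwise. -/
theorem szN_szM_glue {V₀ V₁ : Type*} [Fintype V₀] [Fintype V₁]
    (H₀ : SimpleGraph V₀) (H₁ : SimpleGraph V₁) (u₀ : V₀) (u₁ : V₁)
    (h₀ : H₀.Connected) (h₁ : H₁.Connected) (hG : (glue H₀ H₁ u₀ u₁).Connected)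
    (w₁ w₂ : V₀) (he : H₀.Adj w₁ w₂) :
    (szN (glue H₀ H₁ u₀ u₁) (Sum.inl w₁) (Sum.inl w₂) =
        szN H₀ w₁ w₂ +
          (if H₀.dist w₁ u₀ < H₀.dist w₂ u₀ then 1 else 0) * (Fintype.card V₁ - 1)) ∧
    (szM (glue H₀ H₁ u₀ u₁) (Sum.inl w₁) (Sum.inl w₂) =
        szM H₀ w₁ w₂ +
          (if H₀.dist w₁ u₀ < H₀.dist w₂ u₀ then 1 else 0) * H₁.edgeFinset.card) ∧
    (szN (glue H₀ H₁ u₀ u₁) (Sum.inl w₂) (Sum.inl w₁) =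
        szN H₀ w₂ w₁ +
          (if H₀.dist w₂ u₀ < H₀.dist w₁ u₀ then 1 else 0) * (Fintype.card V₁ - 1)) ∧
    (szM (glue H₀ H₁ u₀ u₁) (Sum.inl w₂) (Sum.inl w₁) =
        szM H₀ w₂ w₁ +
          (if H₀.dist w₂ u₀ < H₀.dist w₁ u₀ then 1 else 0) * H₁.edgeFinset.card) := by
  exact ⟨szN_glue h₀ h₁ hG w₁ w₂, szM_glue h₀ h₁ hG w₁ w₂,
    szN_glue h₀ h₁ hG w₂ w₁, szM_glue h₀ h₁ hG w₂ w₁⟩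
end
end

section
/- Let G be a connected graph of order n containing a cycle C_l = v₁v₂⋯v_l v₁ of even length l = 2k such that G − E(C_l) has exactly l components G₁,…,G_l with v_i ∈ G_i. With m_i = |E(G_i)|, m = Σ_{i=1}^{l} m_i, y_i = m_i + m_{i−1} + ⋯ + m_{i−k+1} (subscripts modulo l), and e_i = v_i v_{i+1}, one has Σ_{i=1}^{2k} m_{v_i}(e_i|G)·m_{v_{i+1}}(e_i|G) = 2k(k−1)(m+k−1) + Σ_{i=1}^{2k} y_i(m − y_i). -/
open SimpleGraph Finset
open scoped Classical

noncomputable section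

variable {V : Type*}

/-- the graph `G - E(C_l)` obtained by deleting the edges of the cycle
`v₀ v₁ ⋯ v_{l-1} v₀` -/
def offCycle (G : SimpleGraph V) (l : ℕ) (v : ZMod l → V) : SimpleGraph V :=
  G.deleteEdges {e : Sym2 V | ∃ i : ZMod l, e = s(v i, v (i + 1))}

/-- `nᵢ`: the number of vertices of the component `Gᵢ` of `G - E(C_l)`
containing `vᵢ` -/
def compV (G : SimpleGraph V) (l : ℕ) (v : ZMod l → V) (i : ZMod l) : ℕ :=
  {w : V | (offCycle G l v).Reachable (v i) w}.ncard

/-- `mᵢ`: the number of edges of the component `Gᵢ` of `G - E(C_l)`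
containing `vᵢ` -/
def compE (G : SimpleGraph V) (l : ℕ) (v : ZMod l → V) (i : ZMod l) : ℕ :=
  {e : Sym2 V | e ∈ (offCycle G l v).edgeSet ∧
    ∀ w ∈ e, (offCycle G l v).Reachable (v i) w}.ncard

/-- `m = m₁ + ⋯ + m_l` -/
def totE (G : SimpleGraph V) (l : ℕ) (v : ZMod l → V) : ℕ :=
  ∑ i ∈ Finset.range l, compE G l v (i : ZMod l)

/-- `xᵢ = nᵢ + n_{i-1} + ⋯ + n_{i-k+1}` -/
def xSum (G : SimpleGraph V) (l : ℕ) (v : ZMod l → V) (k : ℕ) (i : ZMod l) : ℕ :=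
  ∑ t ∈ Finset.range k, compV G l v (i - (t : ZMod l))

/-- `yᵢ = mᵢ + m_{i-1} + ⋯ + m_{i-k+1}` -/
def ySum (G : SimpleGraph V) (l : ℕ) (v : ZMod l → V) (k : ℕ) (i : ZMod l) : ℕ :=
  ∑ t ∈ Finset.range k, compE G l v (i - (t : ZMod l))

section ValLemmas

lemma zval_add_one {l : ℕ} [NeZero l] (a : ZMod l) :
    (a + 1).val = if a.val = l - 1 then 0 else a.val + 1 := by
  have hl : 0 < l := Nat.pos_of_ne_zero (NeZero.ne l)
  have hv := a.val_lt
  have ha : ((a.val : ℕ) : ZMod l) = a := ZMod.natCast_rightInverse a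
  by_cases h : a.val = l - 1
  · have : a + 1 = 0 := by
      rw [← ha, h]
      have : ((l - 1 : ℕ) : ZMod l) + 1 = ((l - 1 + 1 : ℕ) : ZMod l) := by push_cast; ring
      rw [this]
      have : l - 1 + 1 = l := by omega
      simp [this]
    simp [h, this]
  · have hlt : a.val + 1 < l := by omega
    have : a + 1 = ((a.val + 1 : ℕ) : ZMod l) := by
      rw [Nat.cast_add, Nat.cast_one, ha]
    rw [this, ZMod.val_cast_of_lt hlt]
    simp [h]

lemma zval_sub_one {l : ℕ} [NeZero l] (a : ZMod l) :
    (a - 1).val = if a.val = 0 then l - 1 else a.val - 1 := by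
  have hl : 0 < l := Nat.pos_of_ne_zero (NeZero.ne l)
  have hv := a.val_lt
  have ha : ((a.val : ℕ) : ZMod l) = a := ZMod.natCast_rightInverse a
  by_cases h : a.val = 0
  · have ha0 : a = 0 := by rwa [ZMod.val_eq_zero] at h
    have : a - 1 = ((l - 1 : ℕ) : ZMod l) := by
      rw [ha0]
      have : ((l - 1 : ℕ) : ZMod l) = (l : ZMod l) - 1 := by
        push_cast [Nat.cast_sub hl]; ring
      simp [this]
    rw [this, ZMod.val_cast_of_lt (by omega)]
    simp [h]
  · have : a - 1 = ((a.val - 1 : ℕ) : ZMod l) := by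
      rw [Nat.cast_sub (by omega : 1 ≤ a.val), Nat.cast_one, ha]
    rw [this, ZMod.val_cast_of_lt (by omega)]
    simp [h]

/-- cyclic distance -/
def cdist (l : ℕ) (i j : ZMod l) : ℕ := min (j - i).val (i - j).val

lemma cdist_eq {l : ℕ} [NeZero l] (i j : ZMod l) :
    cdist l i j = min (j - i).val (l - (j - i).val) := by
  by_cases h : j = i
  · subst h; simp [cdist]
  · have h1 : i - j = -(j - i) := by ring
    have h2 : j - i ≠ 0 := sub_ne_zero.mpr h
    rw [cdist, h1, ZMod.neg_val, if_neg h2]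

lemma cdist_comm {l : ℕ} (i j : ZMod l) : cdist l i j = cdist l j i := by
  rw [cdist, cdist, min_comm]

end ValLemmas

section Lipschitz

/-- values of an edge-Lipschitz function grow at most by walk length -/
lemma lipschitz_walk {G : SimpleGraph V} (f : V → ℕ)
    (hf : ∀ a b : V, G.Adj a b → f b ≤ f a + 1) {u w : V} (p : G.Walk u w) :
    f w ≤ f u + p.length := by
  induction p with
  | nil => simp
  | cons h p ih =>
    have := hf _ _ h
    simp only [SimpleGraph.Walk.length_cons]
    omega

lemma lipschitz_dist {G : SimpleGraph V} (f : V → ℕ)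
    (hf : ∀ a b : V, G.Adj a b → f b ≤ f a + 1) {u w : V} (hr : G.Reachable u w) :
    f w ≤ f u + G.dist u w := by
  obtain ⟨p, hp⟩ := hr.exists_walk_length_eq_dist
  simpa [hp] using lipschitz_walk f hf p

/-- a supergraph has smaller distance (given reachability in the subgraph) -/
lemma dist_le_dist_of_le {G H : SimpleGraph V} (hle : H ≤ G) {u w : V}
    (hr : H.Reachable u w) : G.dist u w ≤ H.dist u w := by
  obtain ⟨p, hp⟩ := hr.exists_walk_length_eq_dist
  have := SimpleGraph.dist_le (p.map (SimpleGraph.Hom.ofLE hle))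
  simpa [hp] using this

end Lipschitz

structure CycSetup (V : Type*) [Fintype V] where
  G : SimpleGraph V
  l : ℕ
  k : ℕ
  h3 : 3 ≤ l
  hlk : l = 2 * k
  v : ZMod l → V
  hinj : Function.Injective v
  hconn : G.Connected
  hadj : ∀ i : ZMod l, G.Adj (v i) (v (i + 1))
  hcover : ∀ w : V, ∃ i : ZMod l, (offCycle G l v).Reachable (v i) w
  hsep : ∀ i j : ZMod l, (offCycle G l v).Reachable (v i) (v j) → i = j

namespace CycSetup

variable {V : Type*} [Fintype V] (S : CycSetup V)

/-- the off-cycle graph -/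
def H : SimpleGraph V := offCycle S.G S.l S.v

instance nz : NeZero S.l := ⟨by have := S.h3; omega⟩

lemma hk2 : 2 ≤ S.k := by have h1 := S.h3; have h2 := S.hlk; omega

lemma H_le : S.H ≤ S.G := SimpleGraph.deleteEdges_le _

/-- the component index of a vertex -/
def idx (w : V) : ZMod S.l := (S.hcover w).choose

lemma idx_spec (w : V) : S.H.Reachable (S.v (S.idx w)) w := (S.hcover w).choose_spec

lemma idx_eq {i : ZMod S.l} {w : V} (h : S.H.Reachable (S.v i) w) : S.idx w = i :=
  S.hsep _ _ ((S.idx_spec w).trans h.symm)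

lemma idx_v (i : ZMod S.l) : S.idx (S.v i) = i := S.idx_eq (SimpleGraph.Reachable.refl _)

/-- the distance of a vertex to its attachment point -/
def d0 (w : V) : ℕ := S.H.dist (S.v (S.idx w)) w

lemma d0_v (i : ZMod S.l) : S.d0 (S.v i) = 0 := by
  rw [d0, idx_v, SimpleGraph.dist_self]

lemma adj_cases {a b : V} (h : S.G.Adj a b) :
    S.H.Adj a b ∨ ∃ j : ZMod S.l,
      (a = S.v j ∧ b = S.v (j + 1)) ∨ (a = S.v (j + 1) ∧ b = S.v j) := by
  by_cases hH : S.H.Adj a b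
  · exact Or.inl hH
  · right
    have hmem : s(a, b) ∈ {e : Sym2 V | ∃ i : ZMod S.l, e = s(S.v i, S.v (i + 1))} := by
      by_contra hc
      exact hH (by rw [H, offCycle, SimpleGraph.deleteEdges_adj]; exact ⟨h, hc⟩)
    obtain ⟨j, hj⟩ := hmem
    rw [Sym2.eq_iff] at hj
    exact ⟨j, hj⟩

lemma dist_v_add (i : ZMod S.l) (s : ℕ) : S.G.dist (S.v i) (S.v (i + (s : ZMod S.l))) ≤ s := by
  induction s with
  | zero => simp
  | succ n ih =>
    have hc : (((n : ℕ) + 1 : ℕ) : ZMod S.l) = (n : ZMod S.l) + 1 := by push_cast; ring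
    have h1 := S.hconn.dist_triangle (u := S.v i) (v := S.v (i + (n : ZMod S.l)))
      (w := S.v (i + (n : ZMod S.l) + 1))
    have h2 : S.G.dist (S.v (i + (n : ZMod S.l))) (S.v (i + (n : ZMod S.l) + 1)) ≤ 1 := by
      have := SimpleGraph.dist_le (S.hadj (i + (n : ZMod S.l))).toWalk
      simpa using this
    rw [hc, ← add_assoc]
    omega

lemma dist_vv (i j : ZMod S.l) : S.G.dist (S.v i) (S.v j) ≤ cdist S.l i j := by
  refine le_min ?_ ?_
  · have h := S.dist_v_add i (j - i).val
    rwa [ZMod.natCast_rightInverse (j - i), add_sub_cancel] at h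
  · have h := S.dist_v_add j (i - j).val
    rw [ZMod.natCast_rightInverse (i - j), add_sub_cancel] at h
    rwa [SimpleGraph.dist_comm] at h

lemma cdist_self (i : ZMod S.l) : cdist S.l i i = 0 := by
  simp [cdist]

lemma cdist_step {l : ℕ} [NeZero l] (i j : ZMod l) :
    cdist l i (j + 1) ≤ cdist l i j + 1 ∧ cdist l i j ≤ cdist l i (j + 1) + 1 := by
  rw [cdist_eq, cdist_eq]
  have h1 : j + 1 - i = (j - i) + 1 := by ring
  rw [h1, zval_add_one]
  have h2 := (j - i).val_lt
  have h3 : 0 < l := Nat.pos_of_ne_zero (NeZero.ne l)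
  split_ifs with h <;> simp [Nat.min_def] <;> split_ifs <;> omega

/-- the distance formula -/
theorem dist_formula (i : ZMod S.l) (w : V) :
    S.G.dist (S.v i) w = S.d0 w + cdist S.l i (S.idx w) := by
  apply le_antisymm
  · have h1 := S.hconn.dist_triangle (u := S.v i) (v := S.v (S.idx w)) (w := w)
    have h2 : S.G.dist (S.v (S.idx w)) w ≤ S.d0 w :=
      dist_le_dist_of_le S.H_le (S.idx_spec w)
    have h3 := S.dist_vv i (S.idx w)
    omega
  · set f : V → ℕ := fun x => S.d0 x + cdist S.l i (S.idx x) with hf_def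
    have hf : ∀ a b : V, S.G.Adj a b → f b ≤ f a + 1 := by
      intro a b hab
      rcases S.adj_cases hab with hH | ⟨j, ⟨ha, hb⟩ | ⟨ha, hb⟩⟩
      · have hidx : S.idx b = S.idx a := S.idx_eq ((S.idx_spec a).trans hH.reachable)
        have hd : S.d0 b ≤ S.d0 a + 1 := by
          obtain ⟨p, hp⟩ := (S.idx_spec a).exists_walk_length_eq_dist
          have := SimpleGraph.dist_le (p.concat hH)
          rw [SimpleGraph.Walk.length_concat, hp] at this
          calc S.d0 b = S.H.dist (S.v (S.idx a)) b := by rw [d0, hidx]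
            _ ≤ S.d0 a + 1 := this
        simp only [hf_def, hidx]
        omega
      · subst ha; subst hb
        simp only [hf_def, S.d0_v, S.idx_v, zero_add]
        exact (cdist_step i j).1
      · subst ha; subst hb
        simp only [hf_def, S.d0_v, S.idx_v, zero_add]
        exact (cdist_step i j).2
    have := lipschitz_dist f hf (S.hconn (S.v i) w)
    simpa [hf_def, S.d0_v, S.idx_v, S.cdist_self] using this

-- appended to part2 content within namespace CycSetup
lemma eDist_mk (G : SimpleGraph V) (x y w : V) :
    eDist G s(x, y) w = min (G.dist x w) (G.dist y w) := rfl

lemma eDist_comp_edge {x y : V} (hxy : S.H.Adj x y) (i : ZMod S.l) :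
    eDist S.G s(x, y) (S.v i) = min (S.d0 x) (S.d0 y) + cdist S.l i (S.idx x) := by
  have hsame : S.idx y = S.idx x := S.idx_eq ((S.idx_spec x).trans hxy.reachable)
  rw [eDist_mk, SimpleGraph.dist_comm (u := x), SimpleGraph.dist_comm (u := y),
    S.dist_formula, S.dist_formula, hsame]
  omega

lemma eDist_cyc_edge (j i : ZMod S.l) :
    eDist S.G s(S.v j, S.v (j + 1)) (S.v i) = min (cdist S.l i j) (cdist S.l i (j + 1)) := by
  rw [eDist_mk, SimpleGraph.dist_comm (u := S.v j), SimpleGraph.dist_comm (u := S.v (j+1)),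
    S.dist_formula, S.dist_formula, S.d0_v, S.d0_v, S.idx_v, S.idx_v]
  omega

/-- edges of the `j`-th component -/
def compF (j : ZMod S.l) : Finset (Sym2 V) :=
  Set.toFinset {e : Sym2 V | e ∈ S.H.edgeSet ∧ ∀ w ∈ e, S.H.Reachable (S.v j) w}

lemma mem_compF {j : ZMod S.l} {e : Sym2 V} :
    e ∈ S.compF j ↔ e ∈ S.H.edgeSet ∧ ∀ w ∈ e, S.H.Reachable (S.v j) w := by
  simp [compF]

lemma idx_of_mem_compF {j : ZMod S.l} {x y : V} (h : s(x, y) ∈ S.compF j) :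
    S.H.Adj x y ∧ S.idx x = j := by
  rw [mem_compF] at h
  obtain ⟨he, hr⟩ := h
  rw [SimpleGraph.mem_edgeSet] at he
  exact ⟨he, S.idx_eq (hr x (by simp))⟩

lemma compF_disj : ∀ j ∈ (Finset.univ : Finset (ZMod S.l)), ∀ j' ∈ Finset.univ,
    j ≠ j' → Disjoint (S.compF j) (S.compF j') := by
  intro j _ j' _ hne
  rw [Finset.disjoint_left]
  intro e he he'
  induction e with
  | _ x y =>
    exact hne ((S.idx_of_mem_compF he).2 ▸ (S.idx_of_mem_compF he').2 ▸ rfl)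

lemma H_edge_decomp :
    S.H.edgeFinset = Finset.univ.biUnion (fun j : ZMod S.l => S.compF j) := by
  ext e
  simp only [Finset.mem_biUnion, Finset.mem_univ, true_and, SimpleGraph.mem_edgeFinset]
  induction e with
  | _ x y =>
    constructor
    · intro he
      rw [SimpleGraph.mem_edgeSet] at he
      refine ⟨S.idx x, ?_⟩
      rw [mem_compF]
      refine ⟨(SimpleGraph.mem_edgeSet S.H).mpr he, ?_⟩
      intro w hw
      rw [Sym2.mem_iff] at hw
      rcases hw with rfl | rfl
      · exact S.idx_spec w
      · exact (S.idx_spec x).trans he.reachable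
    · intro ⟨j, hj⟩
      exact (S.mem_compF.mp hj).1

/-- the cycle edges -/
def cycF : Finset (Sym2 V) :=
  Finset.univ.image (fun j : ZMod S.l => s(S.v j, S.v (j + 1)))

lemma cyc_map_inj : Function.Injective (fun j : ZMod S.l => s(S.v j, S.v (j + 1))) := by
  intro j j' h
  simp only [Sym2.eq_iff] at h
  rcases h with ⟨h1, _⟩ | ⟨h1, h2⟩
  · exact S.hinj h1
  · exfalso
    have e1 : j = j' + 1 := S.hinj h1
    have e2 : j + 1 = j' := S.hinj h2
    have h20 : (2 : ZMod S.l) = 0 := by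
      have h21 : j' + 1 + 1 = j' := by rw [← e1]; exact e2
      linear_combination h21
    have h5 : ((2 : ℕ) : ZMod S.l) = 0 := by push_cast at h20 ⊢; exact h20
    have h6 := ZMod.val_cast_of_lt (show 2 < S.l by have := S.h3; omega)
    rw [h5] at h6
    simp at h6

lemma cycF_not_H {e : Sym2 V} (he : e ∈ S.cycF) : e ∉ S.H.edgeSet := by
  rw [H, offCycle, SimpleGraph.edgeSet_deleteEdges]
  rw [cycF, Finset.mem_image] at he
  obtain ⟨j, _, rfl⟩ := he
  exact fun hc => hc.2 ⟨j, rfl⟩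

lemma edge_split : S.G.edgeFinset = S.H.edgeFinset ∪ S.cycF := by
  ext e
  simp only [Finset.mem_union, SimpleGraph.mem_edgeFinset]
  constructor
  · intro he
    by_cases hd : e ∈ {e : Sym2 V | ∃ i : ZMod S.l, e = s(S.v i, S.v (i + 1))}
    · right
      obtain ⟨j, rfl⟩ := hd
      exact Finset.mem_image.mpr ⟨j, Finset.mem_univ j, rfl⟩
    · left
      rw [H, offCycle, SimpleGraph.edgeSet_deleteEdges]
      exact ⟨he, hd⟩
  · intro h
    rcases h with h | h
    · exact SimpleGraph.edgeSet_mono S.H_le h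
    · rw [cycF, Finset.mem_image] at h
      obtain ⟨j, _, rfl⟩ := h
      exact (S.hadj j)

lemma cycF_disj_H : Disjoint S.H.edgeFinset S.cycF := by
  rw [Finset.disjoint_right]
  intro e he
  rw [SimpleGraph.mem_edgeFinset]
  exact S.cycF_not_H he

lemma szM'_eq (u u' : V) :
    {e : Sym2 V | e ∈ S.G.edgeSet ∧ eDist S.G e u < eDist S.G e u'}.ncard =
      (S.G.edgeFinset.filter (fun e => eDist S.G e u < eDist S.G e u')).card := by
  rw [← Set.ncard_coe_finset]
  congr 1
  ext e
  simp [SimpleGraph.mem_edgeFinset]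

theorem szM_formula (i i' : ZMod S.l) :
    {e : Sym2 V | e ∈ S.G.edgeSet ∧ eDist S.G e (S.v i) < eDist S.G e (S.v i')}.ncard =
      (∑ j : ZMod S.l, if cdist S.l i j < cdist S.l i' j then (S.compF j).card else 0)
      + (Finset.univ.filter (fun j : ZMod S.l =>
          min (cdist S.l i j) (cdist S.l i (j + 1)) <
            min (cdist S.l i' j) (cdist S.l i' (j + 1)))).card := by
  rw [szM'_eq, edge_split, Finset.filter_union,
    Finset.card_union_of_disjoint (Finset.disjoint_filter_filter S.cycF_disj_H)]
  congr 1
  · rw [H_edge_decomp, Finset.filter_biUnion,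
      Finset.card_biUnion (fun j hj j' hj' hne =>
        Finset.disjoint_filter_filter (S.compF_disj j hj j' hj' hne))]
    refine Finset.sum_congr rfl (fun j _ => ?_)
    by_cases hc : cdist S.l i j < cdist S.l i' j
    · rw [if_pos hc, Finset.filter_true_of_mem]
      intro e he
      induction e with
      | _ x y =>
        obtain ⟨hadj, hidx⟩ := S.idx_of_mem_compF he
        rw [S.eDist_comp_edge hadj, S.eDist_comp_edge hadj, hidx]
        omega
    · rw [if_neg hc, Finset.card_eq_zero, Finset.filter_false_of_mem]
      intro e he
      induction e with
      | _ x y =>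
        obtain ⟨hadj, hidx⟩ := S.idx_of_mem_compF he
        rw [S.eDist_comp_edge hadj, S.eDist_comp_edge hadj, hidx]
        omega
  · rw [cycF, Finset.filter_image,
      Finset.card_image_of_injective _ S.cyc_map_inj]
    congr 1
    ext j
    simp only [Finset.mem_filter, Finset.mem_univ, true_and, Function.comp]
    rw [S.eDist_cyc_edge, S.eDist_cyc_edge]

-- counting lemmas, still inside namespace CycSetup

lemma compE_card (j : ZMod S.l) : compE S.G S.l S.v j = (S.compF j).card := by
  rw [compE, Set.ncard_eq_toFinset_card']
  rfl

lemma sum_reindex_sub (i : ZMod S.l) (F : ZMod S.l → ℕ) :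
    ∑ j : ZMod S.l, F j = ∑ s : ZMod S.l, F (i - s) :=
  (Fintype.sum_equiv (Equiv.subLeft i) _ _ (fun _ => rfl)).symm

lemma klt : S.k < S.l := by have := S.hk2; have := S.hlk; omega

lemma sum_val_lt (F : ZMod S.l → ℕ) :
    (∑ s : ZMod S.l, if s.val < S.k then F s else 0)
      = ∑ t ∈ Finset.range S.k, F (t : ZMod S.l) := by
  have hk := S.klt
  rw [← Finset.sum_filter]
  refine Finset.sum_nbij' (i := fun s : ZMod S.l => s.val)
    (j := fun t : ℕ => (t : ZMod S.l)) ?_ ?_ ?_ ?_ ?_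
  · intro a ha
    simp only [Finset.mem_filter] at ha
    exact Finset.mem_range.mpr ha.2
  · intro a ha
    rw [Finset.mem_range] at ha
    simp [ZMod.val_cast_of_lt (by omega : a < S.l), ha]
  · intro a _; exact ZMod.natCast_rightInverse a
  · intro a ha
    rw [Finset.mem_range] at ha
    exact ZMod.val_cast_of_lt (by omega)
  · intro a _
    congr 1
    exact (ZMod.natCast_rightInverse a).symm

lemma sum_val_ge (F : ZMod S.l → ℕ) :
    (∑ s : ZMod S.l, if S.k ≤ s.val then F s else 0)
      = ∑ t ∈ Finset.range S.k, F ((S.k + t : ℕ) : ZMod S.l) := by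
  have hk := S.klt
  have hlk := S.hlk
  rw [← Finset.sum_filter]
  refine Finset.sum_nbij' (i := fun s : ZMod S.l => s.val - S.k)
    (j := fun t : ℕ => ((S.k + t : ℕ) : ZMod S.l)) ?_ ?_ ?_ ?_ ?_
  · intro a ha
    simp only [Finset.mem_filter] at ha
    have := a.val_lt
    refine Finset.mem_range.mpr ?_
    show a.val - S.k < S.k
    omega
  · intro a ha
    rw [Finset.mem_range] at ha
    have hv : ((S.k + a : ℕ) : ZMod S.l).val = S.k + a :=
      ZMod.val_cast_of_lt (by omega)
    simp only [Finset.mem_filter, Finset.mem_univ, true_and, hv]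
    omega
  · intro a ha
    simp only [Finset.mem_filter] at ha
    show ((S.k + (a.val - S.k) : ℕ) : ZMod S.l) = a
    have h9 : S.k + (a.val - S.k) = a.val := by omega
    rw [h9]
    exact ZMod.natCast_rightInverse a
  · intro a ha
    rw [Finset.mem_range] at ha
    show ((S.k + a : ℕ) : ZMod S.l).val - S.k = a
    rw [ZMod.val_cast_of_lt (by omega : S.k + a < S.l)]
    omega
  · intro a ha
    simp only [Finset.mem_filter] at ha
    congr 1
    show a = ((S.k + (a.val - S.k) : ℕ) : ZMod S.l)
    have h9 : S.k + (a.val - S.k) = a.val := by omega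
    rw [h9]
    exact (ZMod.natCast_rightInverse a).symm

lemma sum_range_univ (F : ZMod S.l → ℕ) :
    ∑ t ∈ Finset.range S.l, F (t : ZMod S.l) = ∑ j : ZMod S.l, F j := by
  refine Finset.sum_nbij' (i := fun t : ℕ => (t : ZMod S.l))
    (j := fun s : ZMod S.l => s.val) ?_ ?_ ?_ ?_ ?_
  · intro a _; exact Finset.mem_univ _
  · intro a _; exact Finset.mem_range.mpr a.val_lt
  · intro a ha; exact ZMod.val_cast_of_lt (Finset.mem_range.mp ha)
  · intro a _; exact ZMod.natCast_rightInverse a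
  · intro a _; rfl

lemma card_val_cond (i : ZMod S.l) (p : ℕ → Prop) [DecidablePred p] :
    (Finset.univ.filter fun j : ZMod S.l => p ((j - i).val)).card
      = ((Finset.range S.l).filter p).card := by
  refine Finset.card_nbij' (i := fun j : ZMod S.l => (j - i).val)
    (j := fun t : ℕ => (t : ZMod S.l) + i) ?_ ?_ ?_ ?_
  · intro a ha
    simp only [Finset.mem_coe, Finset.mem_filter, Finset.mem_univ, true_and] at ha
    simp only [Finset.mem_coe, Finset.mem_filter, Finset.mem_range]
    exact ⟨(a - i).val_lt, ha⟩
  · intro a ha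
    simp only [Finset.mem_coe, Finset.mem_filter, Finset.mem_range] at ha
    simp only [Finset.mem_coe, Finset.mem_filter, Finset.mem_univ, true_and, add_sub_cancel_right]
    rw [ZMod.val_cast_of_lt ha.1]
    exact ha.2
  · intro a _
    show (((a - i).val : ℕ) : ZMod S.l) + i = a
    rw [ZMod.natCast_rightInverse (a - i)]
    ring
  · intro a ha
    simp only [Finset.mem_coe, Finset.mem_filter, Finset.mem_range] at ha
    show ((a : ZMod S.l) + i - i).val = a
    rw [add_sub_cancel_right]
    exact ZMod.val_cast_of_lt ha.1

/-- condition for component edges closer to `v i` than `v (i+1)` -/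
lemma condA (i j : ZMod S.l) :
    (cdist S.l i j < cdist S.l (i + 1) j)
      ↔ ((j - i).val = 0 ∨ S.k + 1 ≤ (j - i).val) := by
  have hlk := S.hlk; have hk := S.hk2
  rw [cdist_eq, cdist_eq]
  have h1 : j - (i + 1) = (j - i) - 1 := by ring
  rw [h1, zval_sub_one]
  have h2 := (j - i).val_lt
  split_ifs <;> omega

/-- condition for component edges closer to `v (i+1)` than `v i` -/
lemma condB (i j : ZMod S.l) :
    (cdist S.l (i + 1) j < cdist S.l i j)
      ↔ (1 ≤ (j - i).val ∧ (j - i).val ≤ S.k) := by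
  have hlk := S.hlk; have hk := S.hk2
  rw [cdist_eq, cdist_eq]
  have h1 : j - (i + 1) = (j - i) - 1 := by ring
  rw [h1, zval_sub_one]
  have h2 := (j - i).val_lt
  split_ifs <;> omega

/-- condition for cycle edges closer to `v i` than `v (i+1)` -/
lemma condC (i j : ZMod S.l) :
    (min (cdist S.l i j) (cdist S.l i (j + 1)) <
        min (cdist S.l (i + 1) j) (cdist S.l (i + 1) (j + 1)))
      ↔ S.k + 1 ≤ (j - i).val := by
  have hlk := S.hlk; have hk := S.hk2
  rw [cdist_eq, cdist_eq, cdist_eq, cdist_eq]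
  have h1 : j - (i + 1) = (j - i) - 1 := by ring
  have h2 : j + 1 - i = (j - i) + 1 := by ring
  have h3 : j + 1 - (i + 1) = j - i := by ring
  rw [h1, h2, h3, zval_sub_one, zval_add_one]
  have h4 := (j - i).val_lt
  split_ifs <;> omega

/-- condition for cycle edges closer to `v (i+1)` than `v i` -/
lemma condD (i j : ZMod S.l) :
    (min (cdist S.l (i + 1) j) (cdist S.l (i + 1) (j + 1)) <
        min (cdist S.l i j) (cdist S.l i (j + 1)))
      ↔ (1 ≤ (j - i).val ∧ (j - i).val ≤ S.k - 1) := by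
  have hlk := S.hlk; have hk := S.hk2
  rw [cdist_eq, cdist_eq, cdist_eq, cdist_eq]
  have h1 : j - (i + 1) = (j - i) - 1 := by ring
  have h2 : j + 1 - i = (j - i) + 1 := by ring
  have h3 : j + 1 - (i + 1) = j - i := by ring
  rw [h1, h2, h3, zval_sub_one, zval_add_one]
  have h4 := (j - i).val_lt
  split_ifs <;> omega

lemma neg_val_condA (s : ZMod S.l) :
    ((-s).val = 0 ∨ S.k + 1 ≤ (-s).val) ↔ s.val < S.k := by
  have hlk := S.hlk; have hk := S.hk2
  rw [ZMod.neg_val]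
  have h1 := s.val_lt
  have h2 : s = 0 ↔ s.val = 0 := by rw [← ZMod.val_eq_zero]
  split_ifs with h
  · simp only [h2] at h; omega
  · simp only [h2] at h; omega

lemma neg_val_condB (s : ZMod S.l) :
    (1 ≤ (-s).val ∧ (-s).val ≤ S.k) ↔ S.k ≤ s.val := by
  have hlk := S.hlk; have hk := S.hk2
  rw [ZMod.neg_val]
  have h1 := s.val_lt
  have h2 : s = 0 ↔ s.val = 0 := by rw [← ZMod.val_eq_zero]
  split_ifs with h
  · simp only [h2] at h; omega
  · simp only [h2] at h; omega

theorem szM_eval1 (i : ZMod S.l) :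
    {e : Sym2 V | e ∈ S.G.edgeSet ∧
        eDist S.G e (S.v i) < eDist S.G e (S.v (i + 1))}.ncard
      = (∑ t ∈ Finset.range S.k, (S.compF (i - (t : ZMod S.l))).card) + (S.k - 1) := by
  rw [S.szM_formula i (i + 1)]
  congr 1
  · calc
      (∑ j : ZMod S.l, if cdist S.l i j < cdist S.l (i + 1) j then (S.compF j).card else 0)
          = ∑ j : ZMod S.l, (if (j - i).val = 0 ∨ S.k + 1 ≤ (j - i).val
              then (S.compF j).card else 0) :=
            Finset.sum_congr rfl (fun j _ => if_congr (S.condA i j) rfl rfl)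
      _ = ∑ s : ZMod S.l, (if (i - s - i).val = 0 ∨ S.k + 1 ≤ (i - s - i).val
              then (S.compF (i - s)).card else 0) := S.sum_reindex_sub i _
      _ = ∑ s : ZMod S.l, (if s.val < S.k then (S.compF (i - s)).card else 0) := by
            refine Finset.sum_congr rfl (fun s _ => ?_)
            have h : i - s - i = -s := by ring
            rw [h, if_congr (S.neg_val_condA s) rfl rfl]
      _ = _ := S.sum_val_lt _
  · have h1 : (Finset.univ.filter fun j : ZMod S.l =>
        min (cdist S.l i j) (cdist S.l i (j + 1)) <
          min (cdist S.l (i + 1) j) (cdist S.l (i + 1) (j + 1)))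
        = Finset.univ.filter fun j : ZMod S.l => S.k + 1 ≤ (j - i).val :=
      Finset.filter_congr (fun j _ => by rw [S.condC])
    rw [h1, S.card_val_cond i (fun t => S.k + 1 ≤ t)]
    have h2 : (Finset.range S.l).filter (fun t => S.k + 1 ≤ t) = Finset.Ico (S.k + 1) S.l := by
      ext t
      simp only [Finset.mem_filter, Finset.mem_range, Finset.mem_Ico]
      exact ⟨fun h => ⟨h.2, h.1⟩, fun h => ⟨h.2, h.1⟩⟩
    rw [h2, Nat.card_Ico]
    have := S.hlk; have := S.hk2
    omega

theorem szM_eval2 (i : ZMod S.l) :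
    {e : Sym2 V | e ∈ S.G.edgeSet ∧
        eDist S.G e (S.v (i + 1)) < eDist S.G e (S.v i)}.ncard
      = (∑ t ∈ Finset.range S.k, (S.compF (i - ((S.k + t : ℕ) : ZMod S.l))).card)
          + (S.k - 1) := by
  rw [S.szM_formula (i + 1) i]
  congr 1
  · calc
      (∑ j : ZMod S.l, if cdist S.l (i + 1) j < cdist S.l i j then (S.compF j).card else 0)
          = ∑ j : ZMod S.l, (if 1 ≤ (j - i).val ∧ (j - i).val ≤ S.k
              then (S.compF j).card else 0) :=
            Finset.sum_congr rfl (fun j _ => if_congr (S.condB i j) rfl rfl)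
      _ = ∑ s : ZMod S.l, (if 1 ≤ (i - s - i).val ∧ (i - s - i).val ≤ S.k
              then (S.compF (i - s)).card else 0) := S.sum_reindex_sub i _
      _ = ∑ s : ZMod S.l, (if S.k ≤ s.val then (S.compF (i - s)).card else 0) := by
            refine Finset.sum_congr rfl (fun s _ => ?_)
            have h : i - s - i = -s := by ring
            rw [h, if_congr (S.neg_val_condB s) rfl rfl]
      _ = _ := S.sum_val_ge _
  · have h1 : (Finset.univ.filter fun j : ZMod S.l =>
        min (cdist S.l (i + 1) j) (cdist S.l (i + 1) (j + 1)) <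
          min (cdist S.l i j) (cdist S.l i (j + 1)))
        = Finset.univ.filter fun j : ZMod S.l =>
            1 ≤ (j - i).val ∧ (j - i).val ≤ S.k - 1 :=
      Finset.filter_congr (fun j _ => by rw [S.condD])
    rw [h1, S.card_val_cond i (fun t => 1 ≤ t ∧ t ≤ S.k - 1)]
    have hk := S.hk2; have hlk := S.hlk
    have h2 : (Finset.range S.l).filter (fun t => 1 ≤ t ∧ t ≤ S.k - 1)
        = Finset.Icc 1 (S.k - 1) := by
      ext t
      simp only [Finset.mem_filter, Finset.mem_range, Finset.mem_Icc]
      constructor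
      · exact fun h => h.2
      · exact fun h => ⟨by omega, h⟩
    rw [h2, Nat.card_Icc]
    omega

lemma sum_split (i : ZMod S.l) :
    (∑ t ∈ Finset.range S.k, (S.compF (i - (t : ZMod S.l))).card)
      + (∑ t ∈ Finset.range S.k, (S.compF (i - ((S.k + t : ℕ) : ZMod S.l))).card)
      = ∑ j : ZMod S.l, (S.compF j).card := by
  rw [← S.sum_val_lt (fun s => (S.compF (i - s)).card),
    ← S.sum_val_ge (fun s => (S.compF (i - s)).card),
    ← Finset.sum_add_distrib]
  calc
    (∑ s : ZMod S.l, ((if s.val < S.k then (S.compF (i - s)).card else 0)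
        + if S.k ≤ s.val then (S.compF (i - s)).card else 0))
        = ∑ s : ZMod S.l, (S.compF (i - s)).card := by
          refine Finset.sum_congr rfl (fun s _ => ?_)
          by_cases h : s.val < S.k
          · rw [if_pos h, if_neg (by omega), add_zero]
          · rw [if_neg h, if_pos (by omega), zero_add]
    _ = ∑ j : ZMod S.l, (S.compF j).card := (S.sum_reindex_sub i (fun j => (S.compF j).card)).symm

set_option maxHeartbeats 1000000 in
lemma totE_eq : (∑ t ∈ Finset.range S.l, compE S.G S.l S.v (t : ZMod S.l))
    = ∑ j : ZMod S.l, (S.compF j).card := by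
  have h := S.sum_range_univ (fun j => (S.compF j).card)
  rw [← h]
  refine Finset.sum_congr rfl (fun t _ => ?_)
  exact S.compE_card _


theorem szM_final1 (i : ZMod S.l) :
    {e : Sym2 V | e ∈ S.G.edgeSet ∧
        eDist S.G e (S.v i) < eDist S.G e (S.v (i + 1))}.ncard
      = (∑ t ∈ Finset.range S.k, compE S.G S.l S.v (i - (t : ZMod S.l))) + (S.k - 1) := by
  rw [S.szM_eval1 i]
  congr 1
  exact (Finset.sum_congr rfl (fun t _ => S.compE_card _)).symm

theorem szM_final2 (i : ZMod S.l) :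
    {e : Sym2 V | e ∈ S.G.edgeSet ∧
        eDist S.G e (S.v (i + 1)) < eDist S.G e (S.v i)}.ncard
        + (∑ t ∈ Finset.range S.k, compE S.G S.l S.v (i - (t : ZMod S.l)))
      = (∑ t ∈ Finset.range S.l, compE S.G S.l S.v (t : ZMod S.l)) + (S.k - 1) := by
  rw [S.szM_eval2 i, S.totE_eq]
  have h1 : (∑ t ∈ Finset.range S.k, compE S.G S.l S.v (i - (t : ZMod S.l)))
      = ∑ t ∈ Finset.range S.k, (S.compF (i - (t : ZMod S.l))).card :=
    Finset.sum_congr rfl (fun t _ => S.compE_card _)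
  rw [h1, ← S.sum_split i]
  ring

end CycSetup


/-- Let `G` be a connected graph containing a cycle `C_l = v₀v₁⋯v_{l-1}v₀` of even
length `l = 2k` such that `G - E(C_l)` has exactly `l` components `G₀,…,G_{l-1}`
with `vᵢ ∈ Gᵢ`.  With `mᵢ = |E(Gᵢ)|`, `m = Σ mᵢ`, `yᵢ = mᵢ + ⋯ + m_{i-k+1}` and
`eᵢ = vᵢv_{i+1}`, one has
`Σᵢ m_{vᵢ}(eᵢ|G)·m_{v_{i+1}}(eᵢ|G) = 2k(k-1)(m+k-1) + Σᵢ yᵢ(m - yᵢ)`. -/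
theorem szM_cycle_sum_even {V : Type*} [Fintype V] (G : SimpleGraph V)
    (l k : ℕ) (h3 : 3 ≤ l) (hlk : l = 2 * k) (v : ZMod l → V)
    (hinj : Function.Injective v) (hconn : G.Connected)
    (hadj : ∀ i : ZMod l, G.Adj (v i) (v (i + 1)))
    (hcover : ∀ w : V, ∃ i : ZMod l, (offCycle G l v).Reachable (v i) w)
    (hsep : ∀ i j : ZMod l, (offCycle G l v).Reachable (v i) (v j) → i = j) :
    ∑ i ∈ Finset.range l,
        (szM G (v i) (v (i + 1)) * szM G (v (i + 1)) (v i) : ℤ) =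
      2 * k * (k - 1) * ((totE G l v : ℤ) + k - 1) +
        ∑ i ∈ Finset.range l,
          (ySum G l v k i : ℤ) * ((totE G l v : ℤ) - ySum G l v k i) := by
  have hk1 : 1 ≤ k := by omega
  let S : CycSetup V := ⟨G, l, k, h3, hlk, v, hinj, hconn, hadj, hcover, hsep⟩
  have key1 : ∀ j : ZMod l, szM G (v j) (v (j + 1)) = ySum G l v k j + (k - 1) :=
    fun j => S.szM_final1 j
  have key2 : ∀ j : ZMod l, szM G (v (j + 1)) (v j) + ySum G l v k j
      = totE G l v + (k - 1) := fun j => S.szM_final2 j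
  have hsum : ∀ i ∈ Finset.range l,
      (szM G (v i) (v (i + 1)) * szM G (v (i + 1)) (v i) : ℤ)
        = (ySum G l v k i : ℤ) * ((totE G l v : ℤ) - ySum G l v k i)
          + (((k : ℤ) - 1) * (totE G l v : ℤ) + ((k : ℤ) - 1) ^ 2) := by
    intro i _
    have h1 := key1 (i : ZMod l)
    have h2 := key2 (i : ZMod l)
    have c1 : (szM G (v (i : ZMod l)) (v ((i : ZMod l) + 1)) : ℤ)
        = (ySum G l v k (i : ZMod l) : ℤ) + ((k : ℤ) - 1) := by
      rw [h1, Nat.cast_add, Nat.cast_sub hk1, Nat.cast_one]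
    have c2 : (szM G (v ((i : ZMod l) + 1)) (v (i : ZMod l)) : ℤ)
        = (totE G l v : ℤ) + ((k : ℤ) - 1) - (ySum G l v k (i : ZMod l) : ℤ) := by
      have h3 := congrArg (fun n : ℕ => (n : ℤ)) h2
      push_cast [Nat.cast_sub hk1] at h3
      linarith
    rw [c1, c2]
    ring
  rw [Finset.sum_congr rfl hsum, Finset.sum_add_distrib, Finset.sum_const,
    Finset.card_range, nsmul_eq_mul]
  have hl : (l : ℤ) = 2 * k := by exact_mod_cast hlk
  rw [hl]
  ring
end
end

section
/- Let G be a connected graph of order n containing a cycle C_l = v₁v₂⋯v_l v₁ of even length l = 2k such that G − E(C_l) has exactly l components G₁,…,G_l with v_i ∈ G_i. With n_i = |V(G_i)|, m_i = |E(G_i)|, m = Σ_{i=1}^{l} m_i, x_i = n_i + n_{i−1} + ⋯ + n_{i−k+1}, y_i = m_i + m_{i−1} + ⋯ + m_{i−k+1} (subscripts modulo l), and e_i = v_i v_{i+1}, one has Σ_{i=1}^{2k} [n_{v_i}(e_i|G)·m_{v_{i+1}}(e_i|G) + n_{v_{i+1}}(e_i|G)·m_{v_i}(e_i|G)] = 2k²(n+m)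 − 2kn + Σ_{i=1}^{2k} [(x_i − k)(m − y_i) + y_i(n − x_i − k)]. -/
open SimpleGraph Finset
open scoped Classical

noncomputable section

variable {V : Type*}

namespace CSzAux

/-! ### cyclic distance arithmetic -/

def cd {l : ℕ} (i j : ZMod l) : ℕ := min (j - i).val (i - j).val

lemma cd_comm {l : ℕ} (i j : ZMod l) : cd i j = cd j i := min_comm _ _

lemma cd_self {l : ℕ} (i : ZMod l) : cd i i = 0 := by simp [cd]

lemma cd_eq {l : ℕ} [NeZero l] (i j : ZMod l) :
    cd i j = min (i - j).val (l - (i - j).val) := by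
  have h : j - i = -(i - j) := by ring
  rw [cd, h, ZMod.neg_val]
  split_ifs with h0
  · simp [h0]
  · exact min_comm _ _

lemma val_add_one {l : ℕ} (h3 : 3 ≤ l) (x : ZMod l) :
    (x + 1).val = (x.val + 1) % l := by
  haveI : NeZero l := ⟨by omega⟩
  rw [ZMod.val_add, ZMod.val_one'' (by omega)]

lemma cdStep {l k : ℕ} (hl : l = 2 * k) (hk : 2 ≤ k) (i j : ZMod l) :
    ((i - j).val < k → cd (i + 1) j = cd i j + 1) ∧
    (¬ (i - j).val < k → cd i j = cd (i + 1) j + 1) := by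
  haveI : NeZero l := ⟨by omega⟩
  have h3 : 3 ≤ l := by omega
  have he : (i - j).val < l := ZMod.val_lt _
  have h2 : (i + 1 - j).val = ((i - j).val + 1) % l := by
    have h : i + 1 - j = (i - j) + 1 := by ring
    rw [h, val_add_one h3]
  have hcase : ((i - j).val + 1 = l ∧ (i + 1 - j).val = 0) ∨
      ((i - j).val + 1 < l ∧ (i + 1 - j).val = (i - j).val + 1) := by
    by_cases hx : (i - j).val + 1 = l
    · exact Or.inl ⟨hx, by rw [h2, hx, Nat.mod_self]⟩
    · exact Or.inr ⟨by omega, by rw [h2, Nat.mod_eq_of_lt (by omega)]⟩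
  rw [cd_eq i j, cd_eq (i + 1) j]
  rcases hcase with ⟨h4, h5⟩ | ⟨h4, h5⟩ <;> rw [h5] <;> omega

def ed {l : ℕ} (i j : ZMod l) : ℕ := min (cd i j) (cd i (j + 1))

lemma ed_lemma {l k : ℕ} (hl : l = 2 * k) (hk : 2 ≤ k) (i j : ZMod l) :
    (ed i j < ed (i + 1) j ↔ 1 ≤ (i - j).val ∧ (i - j).val < k) ∧
    (ed (i + 1) j < ed i j ↔ k < (i - j).val) := by
  haveI : NeZero l := ⟨by omega⟩
  have h3 : 3 ≤ l := by omega
  have hvf : (i - (j + 1)).val < l := ZMod.val_lt _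
  have hve : (i - j).val < l := ZMod.val_lt _
  have h1 : (i - j).val = ((i - (j + 1)).val + 1) % l := by
    have h : i - j = (i - (j + 1)) + 1 := by ring
    rw [h, val_add_one h3]
  have h2 : (i + 1 - j).val = ((i - j).val + 1) % l := by
    have h : i + 1 - j = (i - j) + 1 := by ring
    rw [h, val_add_one h3]
  have h4 : i + 1 - (j + 1) = i - j := by ring
  have hcase1 : ((i - (j + 1)).val + 1 = l ∧ (i - j).val = 0) ∨
      ((i - (j + 1)).val + 1 < l ∧ (i - j).val = (i - (j + 1)).val + 1) := by
    by_cases hx : (i - (j + 1)).val + 1 = l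
    · exact Or.inl ⟨hx, by rw [h1, hx, Nat.mod_self]⟩
    · exact Or.inr ⟨by omega, by rw [h1, Nat.mod_eq_of_lt (by omega)]⟩
  have hcase2 : ((i - j).val + 1 = l ∧ (i + 1 - j).val = 0) ∨
      ((i - j).val + 1 < l ∧ (i + 1 - j).val = (i - j).val + 1) := by
    by_cases hx : (i - j).val + 1 = l
    · exact Or.inl ⟨hx, by rw [h2, hx, Nat.mod_self]⟩
    · exact Or.inr ⟨by omega, by rw [h2, Nat.mod_eq_of_lt (by omega)]⟩
  unfold ed
  rw [cd_eq i j, cd_eq i (j + 1), cd_eq (i + 1) j, cd_eq (i + 1) (j + 1), h4]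
  rcases hcase1 with ⟨hA, hB⟩ | ⟨hA, hB⟩ <;> rcases hcase2 with ⟨hC, hD⟩ | ⟨hC, hD⟩ <;>
    rw [hD, hB] <;> omega

/-! ### counting helpers -/

lemma ncard_setOf {α : Type*} [Fintype α] (p : α → Prop) [DecidablePred p] :
    {x | p x}.ncard = (Finset.univ.filter p).card := by
  rw [Set.ncard_eq_toFinset_card']
  congr 1
  ext x
  simp

lemma countFiber {α β : Type*} [Fintype α] [Fintype β] [DecidableEq β] (c : α → β) (P : β → Prop) [DecidablePred P] :
    (Finset.univ.filter fun a => P (c a)).card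
      = ∑ j ∈ Finset.univ.filter P, (Finset.univ.filter fun a => c a = j).card := by
  rw [Finset.card_eq_sum_card_fiberwise (f := c) (t := Finset.univ.filter P)
      (fun x hx => by
        simp only [Finset.mem_coe, Finset.mem_filter, Finset.mem_univ, true_and] at hx ⊢; exact hx)]
  refine Finset.sum_congr rfl fun j hj => ?_
  simp only [Finset.mem_filter, Finset.mem_univ, true_and] at hj
  congr 1
  ext a
  simp only [Finset.mem_filter, Finset.mem_univ, true_and]
  constructor
  · rintro ⟨_, h⟩; exact h
  · intro h; exact ⟨by rw [h]; exact hj, h⟩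

lemma countE {V : Type*} [Fintype V] {l : ℕ} [NeZero l] (H : SimpleGraph V) (c : V → ZMod l)
    (hconst : ∀ e ∈ H.edgeSet, ∀ w ∈ e, c w = c e.out.1) (P : ZMod l → Prop)
    [DecidablePred P] :
    (Finset.univ.filter fun e : Sym2 V => e ∈ H.edgeSet ∧ ∀ w ∈ e, P (c w)).card
      = ∑ j ∈ Finset.univ.filter P,
          (Finset.univ.filter fun e : Sym2 V => e ∈ H.edgeSet ∧ ∀ w ∈ e, c w = j).card := by
  rw [Finset.card_eq_sum_card_fiberwise (f := fun e : Sym2 V => c e.out.1)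
      (t := Finset.univ.filter P)
      (fun e he => by
        simp only [Finset.mem_coe, Finset.mem_filter, Finset.mem_univ, true_and] at he ⊢
        exact he.2 _ (Sym2.out_fst_mem e))]
  refine Finset.sum_congr rfl fun j hj => ?_
  simp only [Finset.mem_filter, Finset.mem_univ, true_and] at hj
  congr 1
  ext e
  simp only [Finset.mem_filter, Finset.mem_univ, true_and]
  constructor
  · rintro ⟨⟨he, hP⟩, hj'⟩
    exact ⟨he, fun w hw => by rw [hconst e he w hw, hj']⟩
  · rintro ⟨he, hall⟩
    have ho := hall _ (Sym2.out_fst_mem e)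
    exact ⟨⟨he, fun w hw => by rw [hall w hw]; exact hj⟩, ho⟩

lemma window_sum {l : ℕ} [NeZero l] {a b : ℕ} (hb : b ≤ l) (F : ZMod l → ℕ)
    (i : ZMod l) (P : ZMod l → Prop) [DecidablePred P]
    (hP : ∀ j, P j ↔ a ≤ (i - j).val ∧ (i - j).val < b) :
    ∑ j ∈ Finset.univ.filter P, F j = ∑ t ∈ Finset.Ico a b, F (i - (t : ZMod l)) := by
  have himg : Finset.univ.filter P = (Finset.Ico a b).image (fun t : ℕ => i - (t : ZMod l)) := by
    ext j
    simp only [Finset.mem_filter, Finset.mem_univ, true_and, Finset.mem_image, Finset.mem_Ico, hP]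
    constructor
    · rintro ⟨h1, h2⟩
      refine ⟨(i - j).val, ⟨h1, h2⟩, ?_⟩
      rw [ZMod.natCast_zmod_val]
      ring
    · rintro ⟨t, ⟨ht1, ht2⟩, rfl⟩
      have htl : ((t : ZMod l)).val = t := ZMod.val_cast_of_lt (by omega)
      have h : i - (i - (t : ZMod l)) = (t : ZMod l) := by ring
      rw [h, htl]
      exact ⟨ht1, ht2⟩
  rw [himg]
  refine Finset.sum_image ?_
  intro t ht t' ht' h
  simp only [Finset.mem_coe, Finset.mem_Ico] at ht ht'
  have h2 : (t : ZMod l) = (t' : ZMod l) := by linear_combination -h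
  have h3 := congrArg ZMod.val h2
  rwa [ZMod.val_cast_of_lt (by omega), ZMod.val_cast_of_lt (by omega)] at h3

lemma sum_range_zmod {l : ℕ} [NeZero l] {M : Type*} [AddCommMonoid M] (F : ZMod l → M) :
    ∑ t ∈ Finset.range l, F (t : ZMod l) = ∑ j : ZMod l, F j := by
  have himg : (Finset.univ : Finset (ZMod l))
      = (Finset.range l).image (fun t : ℕ => (t : ZMod l)) := by
    ext j
    simp only [Finset.mem_univ, true_iff, Finset.mem_image, Finset.mem_range]
    exact ⟨j.val, ZMod.val_lt j, ZMod.natCast_zmod_val j⟩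
  rw [himg]
  exact (Finset.sum_image fun t ht t' ht' h => by
    simp only [Finset.mem_coe, Finset.mem_range] at ht ht'
    have h2 := congrArg ZMod.val h
    rwa [ZMod.val_cast_of_lt ht, ZMod.val_cast_of_lt ht'] at h2).symm

end CSzAux

namespace CSzAux

lemma offCycle_le {V : Type*} (G : SimpleGraph V) (l : ℕ) (v : ZMod l → V) :
    offCycle G l v ≤ G := by
  unfold offCycle
  exact SimpleGraph.deleteEdges_le _

lemma exists_cycle_walk {V : Type*} {G : SimpleGraph V} {l : ℕ} {v : ZMod l → V}
    (hadj : ∀ i : ZMod l, G.Adj (v i) (v (i + 1))) (i : ZMod l) (t : ℕ) :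
    ∃ p : G.Walk (v i) (v (i + (t : ZMod l))), p.length = t := by
  induction t with
  | zero =>
    refine ⟨SimpleGraph.Walk.nil.copy rfl (congrArg v ?_), ?_⟩
    · push_cast
      ring
    · simp
  | succ t ih =>
    obtain ⟨p, hp⟩ := ih
    refine ⟨(p.concat (hadj (i + (t : ZMod l)))).copy rfl (congrArg v ?_), ?_⟩
    · push_cast
      ring
    · simp [SimpleGraph.Walk.length_concat, hp]

lemma dist_vv_le {V : Type*} {G : SimpleGraph V} {l : ℕ} [NeZero l] {v : ZMod l → V}
    (hadj : ∀ i : ZMod l, G.Adj (v i) (v (i + 1))) (i j : ZMod l) :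
    G.dist (v i) (v j) ≤ cd i j := by
  refine le_min ?_ ?_
  · obtain ⟨p, hp⟩ := exists_cycle_walk hadj i (j - i).val
    have hv : i + (((j - i).val : ℕ) : ZMod l) = j := by
      rw [ZMod.natCast_zmod_val]
      ring
    have h := SimpleGraph.dist_le (p.copy rfl (congrArg v hv))
    simpa [hp] using h
  · obtain ⟨p, hp⟩ := exists_cycle_walk hadj j (i - j).val
    have hv : j + (((i - j).val : ℕ) : ZMod l) = i := by
      rw [ZMod.natCast_zmod_val]
      ring
    have h := SimpleGraph.dist_le ((p.copy rfl (congrArg v hv)).reverse)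
    simpa [hp] using h

lemma dist_formula {V : Type*} {G : SimpleGraph V} {l k : ℕ} {v : ZMod l → V}
    (hl : l = 2 * k) (hk : 2 ≤ k)
    (hconn : G.Connected) (hadj : ∀ i : ZMod l, G.Adj (v i) (v (i + 1)))
    (c : V → ZMod l)
    (hceq : ∀ (j : ZMod l) (w : V), (offCycle G l v).Reachable (v j) w ↔ c w = j)
    (i : ZMod l) (w : V) :
    G.dist (v i) w = cd i (c w) + (offCycle G l v).dist (v (c w)) w := by
  haveI : NeZero l := ⟨by omega⟩
  have hc : ∀ x, (offCycle G l v).Reachable (v (c x)) x := fun x => (hceq _ x).mpr rfl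
  have hcv : ∀ j : ZMod l, c (v j) = j := fun j =>
    (hceq j (v j)).mp (SimpleGraph.Reachable.refl _)
  apply le_antisymm
  · have h2 : G.dist (v (c w)) w ≤ (offCycle G l v).dist (v (c w)) w := by
      obtain ⟨p, hp⟩ := (hc w).exists_walk_length_eq_dist
      have h := SimpleGraph.dist_le (p.mapLe (offCycle_le G l v))
      simpa [hp] using h
    exact le_trans hconn.dist_triangle (add_le_add (dist_vv_le hadj i (c w)) h2)
  · have lip : ∀ a b : V, G.Adj a b →
        cd i (c b) + (offCycle G l v).dist (v (c b)) b ≤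
          cd i (c a) + (offCycle G l v).dist (v (c a)) a + 1 := by
      intro a b hab
      by_cases hS : s(a, b) ∈ {e : Sym2 V | ∃ t : ZMod l, e = s(v t, v (t + 1))}
      · obtain ⟨t, ht⟩ := hS
        have hor : cd (t + 1) i = cd t i + 1 ∨ cd t i = cd (t + 1) i + 1 := by
          rcases Nat.lt_or_ge (t - i).val k with hx | hx
          · exact Or.inl ((cdStep hl hk t i).1 hx)
          · exact Or.inr ((cdStep hl hk t i).2 (by omega))
        rw [Sym2.eq_iff] at ht
        rcases ht with ⟨ha, hb⟩ | ⟨ha, hb⟩ <;> subst ha <;> subst hb <;>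
          rw [hcv, hcv, SimpleGraph.dist_self, SimpleGraph.dist_self,
            cd_comm i, cd_comm i] <;> omega
      · have hoffadj : (offCycle G l v).Adj a b := by
          unfold offCycle
          rw [SimpleGraph.deleteEdges_adj]
          exact ⟨hab, hS⟩
        have hcb : c b = c a := (hceq (c a) b).mp ((hc a).trans hoffadj.reachable)
        rw [hcb]
        have h3 : (offCycle G l v).dist (v (c a)) b ≤ (offCycle G l v).dist (v (c a)) a + 1 := by
          obtain ⟨p, hp⟩ := (hc a).exists_walk_length_eq_dist
          have h := SimpleGraph.dist_le (p.concat hoffadj)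
          rwa [SimpleGraph.Walk.length_concat, hp] at h
        omega
    have low : ∀ (x : V) (p : G.Walk x w),
        cd i (c w) + (offCycle G l v).dist (v (c w)) w ≤
          cd i (c x) + (offCycle G l v).dist (v (c x)) x + p.length := by
      intro x p
      induction p with
      | nil => simp
      | cons h q ih =>
        rw [SimpleGraph.Walk.length_cons]
        have hl2 := lip _ _ h
        omega
    obtain ⟨p, hp⟩ := (hconn.preconnected (v i) w).exists_walk_length_eq_dist
    have h := low (v i) p
    rw [hcv, cd_self, SimpleGraph.dist_self, hp] at h
    simpa using h

end CSzAux

/-- Let `G` be a connected graph of order `n` containing a cycle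
`C_l = v₀v₁⋯v_{l-1}v₀` of even length `l = 2k` such that `G - E(C_l)` has exactly
`l` components `G₀,…,G_{l-1}` with `vᵢ ∈ Gᵢ`.  With `nᵢ = |V(Gᵢ)|`,
`mᵢ = |E(Gᵢ)|`, `m = Σ mᵢ`, `xᵢ = nᵢ + ⋯ + n_{i-k+1}`, `yᵢ = mᵢ + ⋯ + m_{i-k+1}`
and `eᵢ = vᵢv_{i+1}`, one has
`Σᵢ [n_{vᵢ}(eᵢ|G)·m_{v_{i+1}}(eᵢ|G) + n_{v_{i+1}}(eᵢ|G)·m_{vᵢ}(eᵢ|G)]`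
`= 2k²(n+m) - 2kn + Σᵢ [(xᵢ-k)(m-yᵢ) + yᵢ(n-xᵢ-k)]`. -/
theorem szNM_cycle_sum_even {V : Type*} [Fintype V] (G : SimpleGraph V)
    (n l k : ℕ) (hn : Fintype.card V = n) (h3 : 3 ≤ l) (hlk : l = 2 * k)
    (v : ZMod l → V)
    (hinj : Function.Injective v) (hconn : G.Connected)
    (hadj : ∀ i : ZMod l, G.Adj (v i) (v (i + 1)))
    (hcover : ∀ w : V, ∃ i : ZMod l, (offCycle G l v).Reachable (v i) w)
    (hsep : ∀ i j : ZMod l, (offCycle G l v).Reachable (v i) (v j) → i = j) :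
    ∑ i ∈ Finset.range l,
        (szN G (v i) (v (i + 1)) * szM G (v (i + 1)) (v i) +
          szN G (v (i + 1)) (v i) * szM G (v i) (v (i + 1)) : ℤ) =
      2 * (k : ℤ)^2 * ((n : ℤ) + totE G l v) - 2 * k * n +
        ∑ i ∈ Finset.range l,
          (((xSum G l v k i : ℤ) - k) * ((totE G l v : ℤ) - ySum G l v k i) +
            (ySum G l v k i : ℤ) * ((n : ℤ) - xSum G l v k i - k)) := by
  classical
  haveI : NeZero l := ⟨by omega⟩
  have hk2 : 2 ≤ k := by omega
  have hk1 : 1 ≤ k := by omega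
  have hkl : k ≤ l := by omega
  -- the component index function
  set c : V → ZMod l := fun w => (hcover w).choose with hcdef
  have hc : ∀ w, (offCycle G l v).Reachable (v (c w)) w := fun w => (hcover w).choose_spec
  have hceq : ∀ (j : ZMod l) (w : V), (offCycle G l v).Reachable (v j) w ↔ c w = j := by
    intro j w
    constructor
    · intro h
      exact hsep (c w) j ((hc w).trans h.symm)
    · rintro rfl
      exact hc w
  have hcv : ∀ j : ZMod l, c (v j) = j := fun j =>
    (hceq j (v j)).mp (SimpleGraph.Reachable.refl _)
  have hdist : ∀ (t : ZMod l) (w : V),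
      G.dist (v t) w = CSzAux.cd t (c w) + (offCycle G l v).dist (v (c w)) w :=
    fun t w => CSzAux.dist_formula hlk hk2 hconn hadj c hceq t w
  have hdist' : ∀ (t : ZMod l) (w : V),
      G.dist w (v t) = CSzAux.cd t (c w) + (offCycle G l v).dist (v (c w)) w := by
    intro t w
    rw [SimpleGraph.dist_comm]
    exact hdist t w
  -- edge set structure
  set S : Set (Sym2 V) := {e : Sym2 V | ∃ i : ZMod l, e = s(v i, v (i + 1))} with hSdef
  have hES : (offCycle G l v).edgeSet = G.edgeSet \ S := by
    unfold offCycle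
    rw [← hSdef]
    exact SimpleGraph.edgeSet_deleteEdges S
  have hSsubE : ∀ e ∈ S, e ∈ G.edgeSet := by
    rintro e ⟨t, rfl⟩
    exact (SimpleGraph.mem_edgeSet _).mpr (hadj t)
  have hconst : ∀ e ∈ (offCycle G l v).edgeSet, ∀ w ∈ e, c w = c e.out.1 := by
    intro e
    induction e using Sym2.ind with
    | _ a b =>
      intro he w hw
      rw [SimpleGraph.mem_edgeSet] at he
      have hab : c b = c a := (hceq (c a) b).mp ((hc a).trans he.reachable)
      rcases Sym2.mem_iff.mp (Sym2.out_fst_mem s(a, b)) with ho | ho <;> rw [ho] <;>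
        rcases Sym2.mem_iff.mp hw with rfl | rfl <;> simp [hab]
  -- counting vertices
  have hcompV : ∀ j : ZMod l, compV G l v j = (Finset.univ.filter fun w : V => c w = j).card := by
    intro j
    rw [compV, show {w : V | (offCycle G l v).Reachable (v j) w} = {w : V | c w = j} from
      Set.ext fun w => hceq j w]
    exact CSzAux.ncard_setOf _
  have hcompE : ∀ j : ZMod l, compE G l v j =
      (Finset.univ.filter fun e : Sym2 V =>
        e ∈ (offCycle G l v).edgeSet ∧ ∀ w ∈ e, c w = j).card := by
    intro j
    rw [compE, show {e : Sym2 V | e ∈ (offCycle G l v).edgeSet ∧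
        ∀ w ∈ e, (offCycle G l v).Reachable (v j) w}
      = {e : Sym2 V | e ∈ (offCycle G l v).edgeSet ∧ ∀ w ∈ e, c w = j} from
      Set.ext fun e => and_congr_right fun _ => forall₂_congr fun w _ => hceq j w]
    exact CSzAux.ncard_setOf _
  have hwinV : ∀ i : ZMod l,
      (Finset.univ.filter fun w : V => (i - c w).val < k).card = xSum G l v k i := by
    intro i
    rw [CSzAux.countFiber c (fun j => (i - j).val < k),
      CSzAux.window_sum (a := 0) (b := k) hkl _ i _ (fun j => by simp),
      xSum, ← Finset.range_eq_Ico]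
    exact Finset.sum_congr rfl fun t _ => (hcompV _).symm
  have hwinE : ∀ i : ZMod l,
      (Finset.univ.filter fun e : Sym2 V =>
        e ∈ (offCycle G l v).edgeSet ∧ ∀ w ∈ e, (i - c w).val < k).card = ySum G l v k i := by
    intro i
    rw [CSzAux.countE (offCycle G l v) c hconst (fun j => (i - j).val < k),
      CSzAux.window_sum (a := 0) (b := k) hkl _ i _ (fun j => by simp),
      ySum, ← Finset.range_eq_Ico]
    exact Finset.sum_congr rfl fun t _ => (hcompE _).symm
  have hTcard : (Finset.univ.filter fun e : Sym2 V =>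
      e ∈ (offCycle G l v).edgeSet).card = totE G l v := by
    have h1 := CSzAux.countE (offCycle G l v) c hconst (fun _ => True)
    rw [Finset.filter_true] at h1
    rw [show (Finset.univ.filter fun e : Sym2 V => e ∈ (offCycle G l v).edgeSet)
        = Finset.univ.filter fun e : Sym2 V =>
            e ∈ (offCycle G l v).edgeSet ∧ ∀ w ∈ e, True from
      Finset.filter_congr fun e _ => by simp]
    rw [h1, totE, CSzAux.sum_range_zmod (fun j => compE G l v j)]
    exact Finset.sum_congr rfl fun j _ => (hcompE j).symm
  -- vertex distance comparisons
  have hVcond : ∀ (i : ZMod l) (w : V),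
      G.dist (v i) w < G.dist (v (i + 1)) w ↔ (i - c w).val < k := by
    intro i w
    rw [hdist, hdist]
    have h := CSzAux.cdStep hlk hk2 i (c w)
    constructor
    · intro hlt
      by_contra hx
      have h2 := h.2 hx
      omega
    · intro hx
      have h2 := h.1 hx
      omega
  have hVcond' : ∀ (i : ZMod l) (w : V),
      G.dist (v (i + 1)) w < G.dist (v i) w ↔ ¬ (i - c w).val < k := by
    intro i w
    rw [hdist, hdist]
    have h := CSzAux.cdStep hlk hk2 i (c w)
    constructor
    · intro hlt hx
      have h2 := h.1 hx
      omega
    · intro hx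
      have h2 := h.2 hx
      omega
  have hN1 : ∀ i : ZMod l, szN G (v i) (v (i + 1)) = xSum G l v k i := by
    intro i
    rw [szN, CSzAux.ncard_setOf,
      show (Finset.univ.filter fun w : V => G.dist (v i) w < G.dist (v (i + 1)) w)
        = Finset.univ.filter fun w : V => (i - c w).val < k from
      Finset.filter_congr fun w _ => hVcond i w]
    exact hwinV i
  have hN2 : ∀ i : ZMod l, szN G (v (i + 1)) (v i) + xSum G l v k i = n := by
    intro i
    rw [szN, CSzAux.ncard_setOf,
      show (Finset.univ.filter fun w : V => G.dist (v (i + 1)) w < G.dist (v i) w)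
        = Finset.univ.filter fun w : V => ¬ (i - c w).val < k from
      Finset.filter_congr fun w _ => hVcond' i w]
    have h2 := Finset.card_filter_add_card_filter_not
      (s := (Finset.univ : Finset V)) (p := fun w : V => (i - c w).val < k)
    rw [hwinV i, Finset.card_univ, hn] at h2
    omega
  -- edge distance comparisons
  have hEcond : ∀ (i : ZMod l) (e : Sym2 V), e ∈ (offCycle G l v).edgeSet →
      ((eDist G e (v i) < eDist G e (v (i + 1)) ↔ ∀ w ∈ e, (i - c w).val < k) ∧
       (eDist G e (v (i + 1)) < eDist G e (v i) ↔ ¬ ∀ w ∈ e, (i - c w).val < k)) := by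
    intro i e
    induction e using Sym2.ind with
    | _ a b =>
      intro he
      rw [SimpleGraph.mem_edgeSet] at he
      have hcb : c b = c a := (hceq (c a) b).mp ((hc a).trans he.reachable)
      have hstep := CSzAux.cdStep hlk hk2 i (c a)
      have hor : ((i - c a).val < k ∧ CSzAux.cd (i + 1) (c a) = CSzAux.cd i (c a) + 1) ∨
          (¬ (i - c a).val < k ∧ CSzAux.cd i (c a) = CSzAux.cd (i + 1) (c a) + 1) := by
        rcases Nat.lt_or_ge (i - c a).val k with hx | hx
        · exact Or.inl ⟨hx, hstep.1 hx⟩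
        · exact Or.inr ⟨by omega, hstep.2 (by omega)⟩
      simp only [eDist, Sym2.lift_mk, Sym2.mem_iff, forall_eq_or_imp, forall_eq]
      simp only [hdist']
      rw [hcb]
      rcases hor with ⟨h1, h2⟩ | ⟨h1, h2⟩ <;>
        constructor <;> constructor <;> intro hx <;> omega
  have hCcond : ∀ i j : ZMod l, eDist G s(v j, v (j + 1)) (v i) = CSzAux.ed i j := by
    intro i j
    simp only [eDist, Sym2.lift_mk]
    rw [hdist' i (v j), hdist' i (v (j + 1)), hcv j, hcv (j + 1),
      SimpleGraph.dist_self, SimpleGraph.dist_self]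
    simp [CSzAux.ed]
  have hvinj2 : ∀ j1 j2 : ZMod l, s(v j1, v (j1 + 1)) = s(v j2, v (j2 + 1)) → j1 = j2 := by
    intro j1 j2 h
    rw [Sym2.eq_iff] at h
    rcases h with ⟨h1, _⟩ | ⟨h1, h2⟩
    · exact hinj h1
    · exfalso
      have e1 : j1 = j2 + 1 := hinj h1
      have e2 : j1 + 1 = j2 := hinj h2
      rw [e1] at e2
      have h20 : ((2 : ℕ) : ZMod l) = 0 := by
        push_cast
        linear_combination e2
      rw [ZMod.natCast_eq_zero_iff] at h20
      have := Nat.le_of_dvd (by norm_num) h20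
      omega
  have hCyc : ∀ i : ZMod l,
      ((Finset.univ.filter fun e : Sym2 V =>
        e ∈ S ∧ eDist G e (v i) < eDist G e (v (i + 1))).card = k - 1) ∧
      ((Finset.univ.filter fun e : Sym2 V =>
        e ∈ S ∧ eDist G e (v (i + 1)) < eDist G e (v i)).card = k - 1) := by
    intro i
    constructor
    · rw [show (Finset.univ.filter fun e : Sym2 V =>
            e ∈ S ∧ eDist G e (v i) < eDist G e (v (i + 1)))
          = ((Finset.univ.filter fun j : ZMod l =>
              1 ≤ (i - j).val ∧ (i - j).val < k).image fun j => s(v j, v (j + 1))) from ?_]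
      · rw [Finset.card_image_of_injOn fun j1 _ j2 _ h => hvinj2 j1 j2 h]
        have hw := CSzAux.window_sum (a := 1) (b := k) (by omega) (fun _ => (1 : ℕ)) i
          (fun j => 1 ≤ (i - j).val ∧ (i - j).val < k) (fun j => Iff.rfl)
        rw [Finset.card_eq_sum_ones, hw, Finset.sum_const, Nat.card_Ico, smul_eq_mul, mul_one]
      · ext e
        simp only [Finset.mem_filter, Finset.mem_univ, true_and, Finset.mem_image,
          hSdef, Set.mem_setOf_eq]
        constructor
        · rintro ⟨⟨j, rfl⟩, hQ⟩
          rw [hCcond i j, hCcond (i + 1) j] at hQ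
          exact ⟨j, ((CSzAux.ed_lemma hlk hk2 i j).1).mp hQ, rfl⟩
        · rintro ⟨j, hj, rfl⟩
          rw [hCcond i j, hCcond (i + 1) j]
          exact ⟨⟨j, rfl⟩, ((CSzAux.ed_lemma hlk hk2 i j).1).mpr hj⟩
    · rw [show (Finset.univ.filter fun e : Sym2 V =>
            e ∈ S ∧ eDist G e (v (i + 1)) < eDist G e (v i))
          = ((Finset.univ.filter fun j : ZMod l =>
              k + 1 ≤ (i - j).val ∧ (i - j).val < l).image fun j => s(v j, v (j + 1))) from ?_]
      · rw [Finset.card_image_of_injOn fun j1 _ j2 _ h => hvinj2 j1 j2 h]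
        have hw := CSzAux.window_sum (a := k + 1) (b := l) (le_refl l) (fun _ => (1 : ℕ)) i
          (fun j => k + 1 ≤ (i - j).val ∧ (i - j).val < l) (fun j => Iff.rfl)
        rw [Finset.card_eq_sum_ones, hw, Finset.sum_const, Nat.card_Ico, smul_eq_mul, mul_one]
        omega
      · ext e
        simp only [Finset.mem_filter, Finset.mem_univ, true_and, Finset.mem_image,
          hSdef, Set.mem_setOf_eq]
        constructor
        · rintro ⟨⟨j, rfl⟩, hQ⟩
          rw [hCcond i j, hCcond (i + 1) j] at hQ
          have hj := ((CSzAux.ed_lemma hlk hk2 i j).2).mp hQ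
          have hvl := ZMod.val_lt (i - j)
          exact ⟨j, ⟨by omega, by omega⟩, rfl⟩
        · rintro ⟨j, hj, rfl⟩
          rw [hCcond i j, hCcond (i + 1) j]
          exact ⟨⟨j, rfl⟩, ((CSzAux.ed_lemma hlk hk2 i j).2).mpr (by omega)⟩
  -- splitting the edge set
  have hsplit : ∀ (Q : Sym2 V → Prop) [DecidablePred Q],
      (Finset.univ.filter fun e : Sym2 V => e ∈ G.edgeSet ∧ Q e).card
        = (Finset.univ.filter fun e : Sym2 V => e ∈ (offCycle G l v).edgeSet ∧ Q e).card
          + (Finset.univ.filter fun e : Sym2 V => e ∈ S ∧ Q e).card := by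
    intro Q _inst
    rw [← Finset.card_union_of_disjoint ?hd]
    · congr 1
      ext e
      simp only [Finset.mem_filter, Finset.mem_union, Finset.mem_univ, true_and]
      constructor
      · rintro ⟨hE, hQ⟩
        by_cases hS : e ∈ S
        · exact Or.inr ⟨hS, hQ⟩
        · exact Or.inl ⟨by rw [hES]; exact ⟨hE, hS⟩, hQ⟩
      · rintro (⟨hE, hQ⟩ | ⟨hS, hQ⟩)
        · rw [hES] at hE
          exact ⟨hE.1, hQ⟩
        · exact ⟨hSsubE e hS, hQ⟩
    case hd =>
      rw [Finset.disjoint_left]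
      rintro e he1 he2
      simp only [Finset.mem_filter, Finset.mem_univ, true_and] at he1 he2
      rw [hES] at he1
      exact he1.1.2 he2.1
  have hM1 : ∀ i : ZMod l, szM G (v i) (v (i + 1)) = ySum G l v k i + (k - 1) := by
    intro i
    rw [szM, CSzAux.ncard_setOf, hsplit (fun e => eDist G e (v i) < eDist G e (v (i + 1))),
      show (Finset.univ.filter fun e : Sym2 V =>
          e ∈ (offCycle G l v).edgeSet ∧ eDist G e (v i) < eDist G e (v (i + 1)))
        = Finset.univ.filter fun e : Sym2 V =>
            e ∈ (offCycle G l v).edgeSet ∧ ∀ w ∈ e, (i - c w).val < k from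
        Finset.filter_congr fun e _ => by
          by_cases he : e ∈ (offCycle G l v).edgeSet
          · simp only [he, true_and]
            exact (hEcond i e he).1
          · simp [he],
      hwinE i, (hCyc i).1]
  have hM2 : ∀ i : ZMod l, szM G (v (i + 1)) (v i) + ySum G l v k i = totE G l v + (k - 1) := by
    intro i
    rw [szM, CSzAux.ncard_setOf, hsplit (fun e => eDist G e (v (i + 1)) < eDist G e (v i)),
      (hCyc i).2,
      show (Finset.univ.filter fun e : Sym2 V =>
          e ∈ (offCycle G l v).edgeSet ∧ eDist G e (v (i + 1)) < eDist G e (v i))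
        = Finset.univ.filter fun e : Sym2 V =>
            e ∈ (offCycle G l v).edgeSet ∧ ¬ ∀ w ∈ e, (i - c w).val < k from
        Finset.filter_congr fun e _ => by
          by_cases he : e ∈ (offCycle G l v).edgeSet
          · simp only [he, true_and]
            exact (hEcond i e he).2
          · simp [he]]
    have hsum : (Finset.univ.filter fun e : Sym2 V =>
          e ∈ (offCycle G l v).edgeSet ∧ ∀ w ∈ e, (i - c w).val < k).card
        + (Finset.univ.filter fun e : Sym2 V =>
          e ∈ (offCycle G l v).edgeSet ∧ ¬ ∀ w ∈ e, (i - c w).val < k).card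
        = (Finset.univ.filter fun e : Sym2 V => e ∈ (offCycle G l v).edgeSet).card := by
      rw [← Finset.filter_filter, ← Finset.filter_filter]
      exact Finset.card_filter_add_card_filter_not
        (p := fun e : Sym2 V => ∀ w ∈ e, (i - c w).val < k)
    rw [hwinE i, hTcard] at hsum
    omega
  -- final assembly
  have key : ∀ i0 ∈ Finset.range l,
      (szN G (v i0) (v (i0 + 1)) * szM G (v (i0 + 1)) (v i0) +
        szN G (v (i0 + 1)) (v i0) * szM G (v i0) (v (i0 + 1)) : ℤ)
      = ((((xSum G l v k i0 : ℤ) - k) * ((totE G l v : ℤ) - ySum G l v k i0) +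
          (ySum G l v k i0 : ℤ) * ((n : ℤ) - xSum G l v k i0 - k))
        + (((k : ℤ) - 1) * n + (k : ℤ) * totE G l v)) := by
    intro i0 _
    have e1 := hN1 (i0 : ZMod l)
    have e2 := hN2 (i0 : ZMod l)
    have e3 := hM1 (i0 : ZMod l)
    have e4 := hM2 (i0 : ZMod l)
    have c1 : (szN G (v i0) (v ((i0 : ZMod l) + 1)) : ℤ) = (xSum G l v k i0 : ℤ) := by
      exact_mod_cast congrArg (Nat.cast : ℕ → ℤ) e1
    have c2 : (szN G (v ((i0 : ZMod l) + 1)) (v i0) : ℤ) = (n : ℤ) - xSum G l v k i0 := by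
      omega
    have c3 : (szM G (v i0) (v ((i0 : ZMod l) + 1)) : ℤ) = (ySum G l v k i0 : ℤ) + k - 1 := by
      omega
    have c4 : (szM G (v ((i0 : ZMod l) + 1)) (v i0) : ℤ)
        = (totE G l v : ℤ) + k - 1 - ySum G l v k i0 := by
      omega
    rw [c1, c2, c3, c4]
    ring
  rw [Finset.sum_congr rfl key, Finset.sum_add_distrib, Finset.sum_const, Finset.card_range,
    nsmul_eq_mul]
  have hlz : (l : ℤ) = 2 * k := by exact_mod_cast hlk
  rw [hlz]
  ring
end
end

section
/- Let G be a connected graph of order n containing a cycle C_l = v₁v₂⋯v_l v₁ (l ≥ 3) such that G − E(C_l) has exactly l components G₁,…,G_l with v_i ∈ G_i. With m_i = |E(G_i)|, m = Σ_{i=1}^{l} m_i, e_i = v_i v_{i+1}, and f(m,l) defined by f(m,l) = 2k(k−1)(m+k−1) if l = 2k and f(m,l) = k²(2m+2k+1) if l = 2k+1, one has Σ_{i=1}^{l} m_{v_i}(e_i|G)·m_{v_{i+1}}(e_i|G) ≥ f(m,l), with equality if and only if at most one of m₁, m₂, …, m_l is positive. -/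
open SimpleGraph Finset
open scoped Classical

noncomputable section

variable {V : Type*}

/-- `f(m,l) = 2k(k-1)(m+k-1)` if `l = 2k`, and `f(m,l) = k²(2m+2k+1)` if
`l = 2k+1` -/
def fVal (m l : ℕ) : ℤ :=
  if l % 2 = 0 then
    2 * ((l / 2 : ℕ) : ℤ) * (((l / 2 : ℕ) : ℤ) - 1) * ((m : ℤ) + ((l / 2 : ℕ) : ℤ) - 1)
  else
    ((l / 2 : ℕ) : ℤ)^2 * (2 * (m : ℤ) + 2 * ((l / 2 : ℕ) : ℤ) + 1)


noncomputable section

/-- cyclic distance on `ZMod l` -/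
def cd (l : ℕ) (i j : ZMod l) : ℕ := min ((j - i).val) ((i - j).val)

lemma cd_self (l : ℕ) (i : ZMod l) : cd l i i = 0 := by
  simp [cd]

lemma cd_eq (l : ℕ) [NeZero l] (i j : ZMod l) :
    cd l i j = min ((j - i).val) (l - (j - i).val) := by
  rcases eq_or_ne j i with rfl | h
  · simp [cd]
  · have h1 : i - j = -(j - i) := by ring
    rw [cd, h1, ZMod.neg_val]
    simp [sub_eq_zero, h]

lemma val_add_one {l : ℕ} (hl : 3 ≤ l) (x : ZMod l) :
    (x + 1).val = (x.val + 1) % l := by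
  haveI : NeZero l := ⟨by omega⟩
  haveI : Fact (1 < l) := ⟨by omega⟩
  rw [ZMod.val_add, ZMod.val_one]

lemma cd_lip {l : ℕ} (hl : 3 ≤ l) (i a : ZMod l) :
    cd l i a ≤ cd l i (a + 1) + 1 ∧ cd l i (a + 1) ≤ cd l i a + 1 := by
  haveI : NeZero l := ⟨by omega⟩
  rw [cd_eq, cd_eq]
  have h1 : a + 1 - i = (a - i) + 1 := by ring
  rw [h1, val_add_one hl]
  have ht : (a - i).val < l := ZMod.val_lt _
  set t := (a - i).val
  rcases Nat.lt_or_ge (t + 1) l with h | h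
  · rw [Nat.mod_eq_of_lt h]; omega
  · have hh : t + 1 = l := by omega
    rw [hh, Nat.mod_self]; omega

section Graph
variable {V : Type*} {G : SimpleGraph V} {l : ℕ} {v : ZMod l → V}

lemma offCycle_le : offCycle G l v ≤ G := deleteEdges_le _

lemma cycle_not_offCycle (a : ZMod l) : ¬ (offCycle G l v).Adj (v a) (v (a+1)) := by
  intro h
  rw [offCycle, deleteEdges_adj] at h
  exact h.2 ⟨a, rfl⟩

lemma edge_cases {x y : V} (h : G.Adj x y) :
    (offCycle G l v).Adj x y ∨ ∃ a : ZMod l, s(x, y) = s(v a, v (a + 1)) := by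
  by_cases hc : s(x, y) ∈ {e : Sym2 V | ∃ i : ZMod l, e = s(v i, v (i + 1))}
  · exact Or.inr hc
  · exact Or.inl (by rw [offCycle, deleteEdges_adj]; exact ⟨h, hc⟩)

variable (hadj : ∀ i : ZMod l, G.Adj (v i) (v (i + 1)))

section
include hadj

lemma dist_cycle_le (hconn : G.Connected) (i : ZMod l) (t : ℕ) :
    G.dist (v i) (v (i + (t : ZMod l))) ≤ t := by
  induction t with
  | zero => simp
  | succ n ih =>
      have h2 : G.dist (v (i + (n : ZMod l))) (v (i + (n : ZMod l) + 1)) ≤ 1 :=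
        SimpleGraph.dist_le ((hadj _).toWalk)
      have h3 : (i + ((n+1 : ℕ) : ZMod l)) = i + (n : ZMod l) + 1 := by push_cast; ring
      rw [h3]
      calc G.dist (v i) (v (i + (n:ZMod l) + 1)) ≤
            G.dist (v i) (v (i + (n:ZMod l))) + G.dist (v (i + (n:ZMod l))) (v (i + (n:ZMod l) + 1)) :=
              hconn.dist_triangle
        _ ≤ n + 1 := add_le_add ih h2

lemma dist_v_le_cd [NeZero l] (hconn : G.Connected) (i j : ZMod l) :
    G.dist (v i) (v j) ≤ cd l i j := by
  have h1 : G.dist (v i) (v j) ≤ (j - i).val := by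
    have := dist_cycle_le hadj hconn i (j - i).val
    rwa [ZMod.natCast_zmod_val, add_sub_cancel] at this
  have h2 : G.dist (v i) (v j) ≤ (i - j).val := by
    have := dist_cycle_le hadj hconn j (i - j).val
    rw [ZMod.natCast_zmod_val, add_sub_cancel] at this
    rwa [SimpleGraph.dist_comm] at this
  exact le_min h1 h2

end

variable (hsep : ∀ i j : ZMod l, (offCycle G l v).Reachable (v i) (v j) → i = j)
variable {idx : V → ZMod l} (hidx : ∀ w, (offCycle G l v).Reachable (v (idx w)) w)

section
include hsep hidx

lemma idx_eq {w : V} {j : ZMod l} (h : (offCycle G l v).Reachable (v j) w) : idx w = j :=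
  hsep _ _ ((hidx w).trans h.symm)

lemma idx_v (i : ZMod l) : idx (v i) = i := idx_eq hsep hidx (Reachable.refl _)

lemma idx_adj {x y : V} (h : (offCycle G l v).Adj x y) : idx x = idx y :=
  idx_eq hsep hidx ((hidx y).trans h.symm.reachable)

end

lemma hdist_step {j : ZMod l} {x y : V} (hr : (offCycle G l v).Reachable (v j) y)
    (hxy : (offCycle G l v).Adj y x) :
    (offCycle G l v).dist (v j) x ≤ (offCycle G l v).dist (v j) y + 1 := by
  obtain ⟨p, hp⟩ := hr.exists_walk_length_eq_dist
  have := SimpleGraph.dist_le (p.concat hxy)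
  rwa [Walk.length_concat, hp] at this

/-- potential function -/
def phi (G : SimpleGraph V) (l : ℕ) (v : ZMod l → V) (idx : V → ZMod l) (i : ZMod l) (w : V) : ℕ :=
  cd l i (idx w) + (offCycle G l v).dist (v (idx w)) w


lemma phi_lipschitz (hl : 3 ≤ l)
    (hsep : ∀ i j : ZMod l, (offCycle G l v).Reachable (v i) (v j) → i = j)
    {idx : V → ZMod l} (hidx : ∀ w, (offCycle G l v).Reachable (v (idx w)) w)
    {x y : V} (h : G.Adj x y) (i : ZMod l) :
    phi G l v idx i x ≤ phi G l v idx i y + 1 := by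
  haveI : NeZero l := ⟨by omega⟩
  rcases edge_cases h with hH | ⟨a, ha⟩
  · have hj : idx x = idx y := idx_adj hsep hidx hH
    unfold phi
    rw [hj]
    have := hdist_step (hidx y) hH.symm
    omega
  · rw [Sym2.eq_iff] at ha
    have hda : (offCycle G l v).dist (v a) (v a) = 0 := SimpleGraph.dist_self
    have hda1 : (offCycle G l v).dist (v (a+1)) (v (a+1)) = 0 := SimpleGraph.dist_self
    rcases ha with ⟨hx, hy⟩ | ⟨hx, hy⟩
    · subst hx; subst hy
      unfold phi
      rw [idx_v hsep hidx, idx_v hsep hidx, hda, hda1]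
      have := cd_lip hl i a
      omega
    · subst hx; subst hy
      unfold phi
      rw [idx_v hsep hidx, idx_v hsep hidx, hda, hda1]
      have := cd_lip hl i a
      omega

lemma phi_walk (hl : 3 ≤ l)
    (hsep : ∀ i j : ZMod l, (offCycle G l v).Reachable (v i) (v j) → i = j)
    {idx : V → ZMod l} (hidx : ∀ w, (offCycle G l v).Reachable (v (idx w)) w)
    (i : ZMod l) {x w : V} (p : G.Walk x w) :
    phi G l v idx i w ≤ phi G l v idx i x + p.length := by
  induction p with
  | nil => simp
  | @cons a b c hab q ih =>
      have h1 : phi G l v idx i b ≤ phi G l v idx i a + 1 :=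
        phi_lipschitz hl hsep hidx hab.symm i
      rw [Walk.length_cons]
      omega

lemma dist_formula (hl : 3 ≤ l) (hconn : G.Connected)
    (hadj : ∀ i : ZMod l, G.Adj (v i) (v (i + 1)))
    (hsep : ∀ i j : ZMod l, (offCycle G l v).Reachable (v i) (v j) → i = j)
    {idx : V → ZMod l} (hidx : ∀ w, (offCycle G l v).Reachable (v (idx w)) w)
    (i : ZMod l) (w : V) :
    G.dist (v i) w = cd l i (idx w) + (offCycle G l v).dist (v (idx w)) w := by
  haveI : NeZero l := ⟨by omega⟩
  apply le_antisymm
  · have h1 : G.dist (v i) (v (idx w)) ≤ cd l i (idx w) := dist_v_le_cd hadj hconn i (idx w)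
    have h2 : G.dist (v (idx w)) w ≤ (offCycle G l v).dist (v (idx w)) w := by
      obtain ⟨p, hp⟩ := (hidx w).exists_walk_length_eq_dist
      have := SimpleGraph.dist_le (p.mapLe offCycle_le)
      rwa [Walk.length_map, hp] at this
    calc G.dist (v i) w ≤ G.dist (v i) (v (idx w)) + G.dist (v (idx w)) w := hconn.dist_triangle
      _ ≤ _ := add_le_add h1 h2
  · obtain ⟨p, hp⟩ := hconn.exists_walk_length_eq_dist (v i) w
    have := phi_walk hl hsep hidx i p
    rw [hp] at this
    have h0 : phi G l v idx i (v i) = 0 := by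
      unfold phi
      rw [idx_v hsep hidx, cd_self, SimpleGraph.dist_self]
    rw [h0] at this
    unfold phi at this
    omega

lemma dist_vv (hl : 3 ≤ l) (hconn : G.Connected)
    (hadj : ∀ i : ZMod l, G.Adj (v i) (v (i + 1)))
    (hsep : ∀ i j : ZMod l, (offCycle G l v).Reachable (v i) (v j) → i = j)
    {idx : V → ZMod l} (hidx : ∀ w, (offCycle G l v).Reachable (v (idx w)) w)
    (i a : ZMod l) :
    G.dist (v i) (v a) = cd l i a := by
  rw [dist_formula hl hconn hadj hsep hidx i (v a), idx_v hsep hidx, SimpleGraph.dist_self,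
    add_zero]

end Graph

section Count
variable {V : Type*} [Fintype V] {G : SimpleGraph V} {l : ℕ} {v : ZMod l → V}

lemma eDist_mk (x y w : V) : eDist G s(x, y) w = min (G.dist x w) (G.dist y w) := rfl

/-- the edge set of component `j` -/
def cSet (G : SimpleGraph V) (l : ℕ) (v : ZMod l → V) (j : ZMod l) : Set (Sym2 V) :=
  {e : Sym2 V | e ∈ (offCycle G l v).edgeSet ∧
    ∀ w ∈ e, (offCycle G l v).Reachable (v j) w}

lemma compE_eq (j : ZMod l) : compE G l v j = (cSet G l v j).ncard := rfl

lemma cSet_disj (hsep : ∀ i j : ZMod l, (offCycle G l v).Reachable (v i) (v j) → i = j)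
    {j j' : ZMod l} (h : j ≠ j') : Disjoint (cSet G l v j) (cSet G l v j') := by
  rw [Set.disjoint_left]
  rintro e ⟨he, hr⟩ ⟨_, hr'⟩
  induction e with
  | _ x y =>
    have hx : (offCycle G l v).Reachable (v j) x := hr x (Sym2.mem_mk_left x y)
    have hx' : (offCycle G l v).Reachable (v j') x := hr' x (Sym2.mem_mk_left x y)
    exact h (hsep j j' (hx.trans hx'.symm))

lemma ncard_biUnion (hsep : ∀ i j : ZMod l, (offCycle G l v).Reachable (v i) (v j) → i = j)
    (J : Finset (ZMod l)) :
    {e : Sym2 V | ∃ j ∈ J, e ∈ cSet G l v j}.ncard = ∑ j ∈ J, compE G l v j := by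
  induction J using Finset.induction with
  | empty => simp
  | @insert j J hj ih =>
      have hset : {e : Sym2 V | ∃ j' ∈ insert j J, e ∈ cSet G l v j'} =
          cSet G l v j ∪ {e : Sym2 V | ∃ j' ∈ J, e ∈ cSet G l v j'} := by
        ext e
        simp only [Set.mem_union, Set.mem_setOf_eq, Finset.mem_insert]
        constructor
        · rintro ⟨j', hj', he⟩
          rcases hj' with rfl | hj'
          · exact Or.inl he
          · exact Or.inr ⟨j', hj', he⟩
        · rintro (he | ⟨j', hj', he⟩)
          · exact ⟨j, Or.inl rfl, he⟩
          · exact ⟨j', Or.inr hj', he⟩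
      have hdisj : Disjoint (cSet G l v j) {e : Sym2 V | ∃ j' ∈ J, e ∈ cSet G l v j'} := by
        rw [Set.disjoint_left]
        rintro e he ⟨j', hj', he'⟩
        have : j ≠ j' := by rintro rfl; exact hj hj'
        exact (Set.disjoint_left.mp (cSet_disj hsep this)) he he'
      rw [hset, Set.ncard_union_eq hdisj (Set.toFinite _) (Set.toFinite _), ih,
        Finset.sum_insert hj, compE_eq]

end Count

section Master
variable {V : Type*} [Fintype V] {G : SimpleGraph V} {l : ℕ} {v : ZMod l → V}

lemma cycle_pair_inj (hl : 3 ≤ l) (hinj : Function.Injective v) {a b : ZMod l}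
    (h : s(v a, v (a+1)) = s(v b, v (b+1))) : a = b := by
  haveI : NeZero l := ⟨by omega⟩
  rw [Sym2.eq_iff] at h
  rcases h with ⟨h1, _⟩ | ⟨h1, h2⟩
  · exact hinj h1
  · have e1 : a = b + 1 := hinj h1
    have e2 : a + 1 = b := hinj h2
    have h3 : a = a + 2 := by
      calc a = b + 1 := e1
        _ = (a + 1) + 1 := by rw [e2]
        _ = a + 2 := by ring
    have h0 : ((2 : ℕ) : ZMod l) = 0 := by
      rw [Nat.cast_ofNat]; exact (left_eq_add.mp h3)
    rw [ZMod.natCast_eq_zero_iff] at h0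
    have := Nat.le_of_dvd (by norm_num) h0
    omega

lemma szM_formula [NeZero l] (hl : 3 ≤ l) (hconn : G.Connected) (hinj : Function.Injective v)
    (hadj : ∀ i : ZMod l, G.Adj (v i) (v (i + 1)))
    (hsep : ∀ i j : ZMod l, (offCycle G l v).Reachable (v i) (v j) → i = j)
    {idx : V → ZMod l} (hidx : ∀ w, (offCycle G l v).Reachable (v (idx w)) w)
    (i i' : ZMod l) :
    szM G (v i) (v i') =
      (univ.filter (fun a : ZMod l =>
        min (cd l i a) (cd l i (a+1)) < min (cd l i' a) (cd l i' (a+1)))).card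
      + ∑ j ∈ univ.filter (fun j : ZMod l => cd l i j < cd l i' j), compE G l v j := by
  haveI : NeZero l := ⟨by omega⟩
  have hcyc : ∀ a w : ZMod l, eDist G s(v a, v (a+1)) (v w) = min (cd l w a) (cd l w (a+1)) := by
    intro a w
    have d1 : G.dist (v a) (v w) = cd l w a := by
      rw [SimpleGraph.dist_comm]; exact dist_vv hl hconn hadj hsep hidx w a
    have d2 : G.dist (v (a+1)) (v w) = cd l w (a+1) := by
      rw [SimpleGraph.dist_comm]; exact dist_vv hl hconn hadj hsep hidx w (a+1)
    rw [eDist_mk, d1, d2]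
  have hHedge : ∀ {x y : V}, (offCycle G l v).Adj x y → ∀ w : ZMod l,
      eDist G s(x, y) (v w) = cd l w (idx x) +
        min ((offCycle G l v).dist (v (idx x)) x) ((offCycle G l v).dist (v (idx x)) y) := by
    intro x y hxy w
    have hjy : idx y = idx x := (idx_adj hsep hidx hxy).symm
    have d1 : G.dist x (v w) = cd l w (idx x) + (offCycle G l v).dist (v (idx x)) x := by
      rw [SimpleGraph.dist_comm]; exact dist_formula hl hconn hadj hsep hidx w x
    have d2 : G.dist y (v w) = cd l w (idx x) + (offCycle G l v).dist (v (idx x)) y := by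
      rw [SimpleGraph.dist_comm, dist_formula hl hconn hadj hsep hidx w y, hjy]
    rw [eDist_mk, d1, d2, Nat.add_min_add_left]
  have hset : {e : Sym2 V | e ∈ G.edgeSet ∧ eDist G e (v i) < eDist G e (v i')} =
      ((fun a : ZMod l => s(v a, v (a+1))) ''
        ↑(univ.filter (fun a : ZMod l =>
          min (cd l i a) (cd l i (a+1)) < min (cd l i' a) (cd l i' (a+1)))))
      ∪ {e : Sym2 V | ∃ j ∈ univ.filter (fun j : ZMod l => cd l i j < cd l i' j),
          e ∈ cSet G l v j} := by
    ext e
    induction e with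
    | _ x y =>
      simp only [Set.mem_union, Set.mem_image, Set.mem_setOf_eq, Finset.coe_filter,
        Finset.mem_filter, Finset.mem_univ, true_and]
      constructor
      · rintro ⟨hE, hlt⟩
        have hadjxy : G.Adj x y := hE
        rcases edge_cases hadjxy with hH | ⟨a, ha⟩
        · right
          refine ⟨idx x, ?_, hH, ?_⟩
          · rw [hHedge hH i, hHedge hH i'] at hlt; omega
          · intro w hw
            rcases Sym2.mem_iff.mp hw with rfl | rfl
            · exact hidx w
            · have := idx_adj hsep hidx hH
              rw [this]; exact hidx w
        · left
          refine ⟨a, ?_, ha.symm⟩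
          rw [ha, hcyc a i, hcyc a i'] at hlt
          exact hlt
      · rintro (⟨a, hcond, hEq⟩ | ⟨j, hcond, heH, hreach⟩)
        · rw [← hEq]
          refine ⟨(mem_edgeSet G).mpr (hadj a), ?_⟩
          rw [hcyc a i, hcyc a i']
          exact hcond
        · have hHadj : (offCycle G l v).Adj x y := heH
          have hjx : idx x = j := idx_eq hsep hidx (hreach x (Sym2.mem_mk_left x y))
          refine ⟨(mem_edgeSet G).mpr (offCycle_le hHadj), ?_⟩
          rw [hHedge hHadj i, hHedge hHadj i', hjx]
          omega
  have hdisj : Disjoint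
      ((fun a : ZMod l => s(v a, v (a+1))) ''
        ↑(univ.filter (fun a : ZMod l =>
          min (cd l i a) (cd l i (a+1)) < min (cd l i' a) (cd l i' (a+1)))))
      {e : Sym2 V | ∃ j ∈ univ.filter (fun j : ZMod l => cd l i j < cd l i' j),
          e ∈ cSet G l v j} := by
    rw [Set.disjoint_left]
    rintro e ⟨a, _, rfl⟩ ⟨j, _, heH, _⟩
    exact cycle_not_offCycle a heH
  rw [szM, hset, Set.ncard_union_eq hdisj (Set.toFinite _) (Set.toFinite _),
    Set.ncard_image_of_injOn (fun a _ b _ h => cycle_pair_inj hl hinj h),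
    Set.ncard_coe_finset, ncard_biUnion hsep]

end Master

section Arith
variable {l : ℕ}

lemma mod_helper1 {r : ℕ} (hl : 3 ≤ l) (hr : r < l) :
    (r + 1) % l = if r + 1 = l then 0 else r + 1 := by
  split_ifs with h
  · rw [h, Nat.mod_self]
  · exact Nat.mod_eq_of_lt (by omega)

lemma mod_helper2 {r : ℕ} (hl : 3 ≤ l) (hr : r < l) :
    (r + (l - 1)) % l = if r = 0 then l - 1 else r - 1 := by
  split_ifs with h
  · subst h; rw [Nat.zero_add]; exact Nat.mod_eq_of_lt (by omega)
  · have h1 : r + (l - 1) = l + (r - 1) := by omega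
    rw [h1, Nat.add_mod_left]
    exact Nat.mod_eq_of_lt (by omega)

lemma cyc1 (hl : 3 ≤ l) {r : ℕ} (hr : r < l) :
    (min (min r (l - r)) (min ((r + 1) % l) (l - (r + 1) % l)) <
      min (min ((r + (l - 1)) % l) (l - (r + (l - 1)) % l)) (min r (l - r))) ↔
      l / 2 + 1 ≤ r := by
  rw [mod_helper1 hl hr, mod_helper2 hl hr]
  split_ifs <;> omega

lemma cyc2 (hl : 3 ≤ l) {r : ℕ} (hr : r < l) :
    (min (min ((r + (l - 1)) % l) (l - (r + (l - 1)) % l)) (min r (l - r)) <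
      min (min r (l - r)) (min ((r + 1) % l) (l - (r + 1) % l))) ↔
      1 ≤ r ∧ r < l - l / 2 := by
  rw [mod_helper1 hl hr, mod_helper2 hl hr]
  split_ifs <;> omega

lemma mod_helper3 {t : ℕ} (hl : 3 ≤ l) (ht : t < l) :
    (l - t) % l = if t = 0 then 0 else l - t := by
  split_ifs with h
  · subst h; simp
  · exact Nat.mod_eq_of_lt (by omega)

lemma comp1 (hl : 3 ≤ l) {t : ℕ} (ht : t < l) :
    (min ((l - t) % l) (l - (l - t) % l) < min (l - t - 1) (l - (l - t - 1))) ↔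
      t < l / 2 := by
  rw [mod_helper3 hl ht]
  split_ifs <;> omega

lemma comp2 (hl : 3 ≤ l) {t : ℕ} (ht : t < l) :
    (min (l - t - 1) (l - (l - t - 1)) < min ((l - t) % l) (l - (l - t) % l)) ↔
      l - l / 2 ≤ t := by
  rw [mod_helper3 hl ht]
  split_ifs <;> omega

end Arith

section Keys
variable {l : ℕ}

lemma neg_one_cast (hl : 3 ≤ l) : ((l - 1 : ℕ) : ZMod l) = -1 := by
  haveI : NeZero l := ⟨by omega⟩
  rw [Nat.cast_sub (by omega : 1 ≤ l), ZMod.natCast_self, Nat.cast_one, zero_sub]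

lemma cyc_key (hl : 3 ≤ l) (i a : ZMod l) :
    (min (cd l i a) (cd l i (a + 1)) < min (cd l (i + 1) a) (cd l (i + 1) (a + 1))) ↔
      l / 2 + 1 ≤ (a - i).val := by
  haveI : NeZero l := ⟨by omega⟩
  set r := (a - i).val with hrdef
  have hr : r < l := ZMod.val_lt _
  have e2 : ((a + 1) - i).val = (r + 1) % l := by
    rw [show a + 1 - i = (a - i) + 1 by ring, val_add_one hl]
  have e3 : (a - (i + 1)).val = (r + (l - 1)) % l := by
    rw [show a - (i + 1) = (a - i) + ((l - 1 : ℕ) : ZMod l) by rw [neg_one_cast hl]; ring,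
      ZMod.val_add, ZMod.val_cast_of_lt (by omega : l - 1 < l)]
  have e4 : ((a + 1) - (i + 1)).val = r := by
    rw [show a + 1 - (i + 1) = a - i by ring]
  rw [cd_eq, cd_eq, cd_eq, cd_eq, e2, e3, e4, ← hrdef]
  exact cyc1 hl hr

lemma cyc_key' (hl : 3 ≤ l) (i a : ZMod l) :
    (min (cd l (i + 1) a) (cd l (i + 1) (a + 1)) < min (cd l i a) (cd l i (a + 1))) ↔
      1 ≤ (a - i).val ∧ (a - i).val < l - l / 2 := by
  haveI : NeZero l := ⟨by omega⟩
  set r := (a - i).val with hrdef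
  have hr : r < l := ZMod.val_lt _
  have e2 : ((a + 1) - i).val = (r + 1) % l := by
    rw [show a + 1 - i = (a - i) + 1 by ring, val_add_one hl]
  have e3 : (a - (i + 1)).val = (r + (l - 1)) % l := by
    rw [show a - (i + 1) = (a - i) + ((l - 1 : ℕ) : ZMod l) by rw [neg_one_cast hl]; ring,
      ZMod.val_add, ZMod.val_cast_of_lt (by omega : l - 1 < l)]
  have e4 : ((a + 1) - (i + 1)).val = r := by
    rw [show a + 1 - (i + 1) = a - i by ring]
  rw [cd_eq, cd_eq, cd_eq, cd_eq, e2, e3, e4, ← hrdef]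
  exact cyc2 hl hr

lemma comp_key (hl : 3 ≤ l) (i j : ZMod l) :
    (cd l i j < cd l (i + 1) j) ↔ (i - j).val < l / 2 := by
  haveI : NeZero l := ⟨by omega⟩
  set t := (i - j).val with htdef
  have ht : t < l := ZMod.val_lt _
  have f1 : (j - i).val = (l - t) % l := by
    rw [show j - i = -(i - j) by ring, ZMod.neg_val']
  have f2 : (j - (i + 1)).val = l - t - 1 := by
    rw [show j - (i + 1) = -((i - j) + 1) by ring, ZMod.neg_val', val_add_one hl, ← htdef]
    rcases Nat.lt_or_ge (t + 1) l with h | h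
    · rw [Nat.mod_eq_of_lt h]
      exact Nat.mod_eq_of_lt (by omega)
    · have : t + 1 = l := by omega
      rw [this, Nat.mod_self, Nat.sub_zero, Nat.mod_self]
      omega
  rw [cd_eq, cd_eq, f1, f2]
  exact comp1 hl ht

lemma comp_key' (hl : 3 ≤ l) (i j : ZMod l) :
    (cd l (i + 1) j < cd l i j) ↔ l - l / 2 ≤ (i - j).val := by
  haveI : NeZero l := ⟨by omega⟩
  set t := (i - j).val with htdef
  have ht : t < l := ZMod.val_lt _
  have f1 : (j - i).val = (l - t) % l := by
    rw [show j - i = -(i - j) by ring, ZMod.neg_val']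
  have f2 : (j - (i + 1)).val = l - t - 1 := by
    rw [show j - (i + 1) = -((i - j) + 1) by ring, ZMod.neg_val', val_add_one hl, ← htdef]
    rcases Nat.lt_or_ge (t + 1) l with h | h
    · rw [Nat.mod_eq_of_lt h]
      exact Nat.mod_eq_of_lt (by omega)
    · have : t + 1 = l := by omega
      rw [this, Nat.mod_self, Nat.sub_zero, Nat.mod_self]
      omega
  rw [cd_eq, cd_eq, f1, f2]
  exact comp2 hl ht

end Keys

section Filters
variable {V : Type*} [Fintype V] {G : SimpleGraph V} {l : ℕ} [NeZero l] {v : ZMod l → V}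

lemma cast_inj_of_lt {a b : ℕ} (ha : a < l) (hb : b < l) (h : (a : ZMod l) = b) : a = b := by
  rw [← ZMod.val_cast_of_lt ha, ← ZMod.val_cast_of_lt hb, h]

lemma cyc_count (hl : 3 ≤ l) (i : ZMod l) :
    (univ.filter (fun a : ZMod l =>
      min (cd l i a) (cd l i (a + 1)) < min (cd l (i + 1) a) (cd l (i + 1) (a + 1)))).card =
      l - 1 - l / 2 := by
  have himg : univ.filter (fun a : ZMod l =>
      min (cd l i a) (cd l i (a + 1)) < min (cd l (i + 1) a) (cd l (i + 1) (a + 1))) =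
      (Finset.Ico (l / 2 + 1) l).image (fun r : ℕ => i + (r : ZMod l)) := by
    ext a
    simp only [Finset.mem_filter, Finset.mem_univ, true_and, Finset.mem_image, Finset.mem_Ico]
    rw [cyc_key hl i a]
    constructor
    · intro h
      exact ⟨(a - i).val, ⟨h, ZMod.val_lt _⟩, by rw [ZMod.natCast_zmod_val]; ring⟩
    · rintro ⟨r, ⟨h1, h2⟩, rfl⟩
      rwa [add_sub_cancel_left, ZMod.val_cast_of_lt h2]
  rw [himg, Finset.card_image_of_injOn, Nat.card_Ico]
  · omega
  · intro a ha b hb h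
    simp only [Finset.coe_Ico, Set.mem_Ico] at ha hb
    exact cast_inj_of_lt ha.2 hb.2 (by have := add_left_cancel h; exact_mod_cast this)

lemma cyc_count' (hl : 3 ≤ l) (i : ZMod l) :
    (univ.filter (fun a : ZMod l =>
      min (cd l (i + 1) a) (cd l (i + 1) (a + 1)) < min (cd l i a) (cd l i (a + 1)))).card =
      l - 1 - l / 2 := by
  have himg : univ.filter (fun a : ZMod l =>
      min (cd l (i + 1) a) (cd l (i + 1) (a + 1)) < min (cd l i a) (cd l i (a + 1))) =
      (Finset.Ico 1 (l - l / 2)).image (fun r : ℕ => i + (r : ZMod l)) := by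
    ext a
    simp only [Finset.mem_filter, Finset.mem_univ, true_and, Finset.mem_image, Finset.mem_Ico]
    rw [cyc_key' hl i a]
    constructor
    · rintro ⟨h1, h2⟩
      exact ⟨(a - i).val, ⟨h1, h2⟩, by rw [ZMod.natCast_zmod_val]; ring⟩
    · rintro ⟨r, ⟨h1, h2⟩, rfl⟩
      rw [add_sub_cancel_left, ZMod.val_cast_of_lt (by omega : r < l)]
      exact ⟨h1, h2⟩
  rw [himg, Finset.card_image_of_injOn, Nat.card_Ico]
  · omega
  · intro a ha b hb h
    simp only [Finset.coe_Ico, Set.mem_Ico] at ha hb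
    have hab : (a : ZMod l) = b := by have := add_left_cancel h; exact_mod_cast this
    exact cast_inj_of_lt (by omega : a < l) (by omega : b < l) hab

lemma comp_sum (hl : 3 ≤ l) (i : ZMod l) :
    ∑ j ∈ univ.filter (fun j : ZMod l => cd l i j < cd l (i + 1) j), compE G l v j =
      ySum G l v (l / 2) i := by
  have himg : univ.filter (fun j : ZMod l => cd l i j < cd l (i + 1) j) =
      (Finset.range (l / 2)).image (fun t : ℕ => i - (t : ZMod l)) := by
    ext j
    simp only [Finset.mem_filter, Finset.mem_univ, true_and, Finset.mem_image, Finset.mem_range]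
    rw [comp_key hl i j]
    constructor
    · intro h
      exact ⟨(i - j).val, h, by rw [ZMod.natCast_zmod_val]; ring⟩
    · rintro ⟨t, ht, rfl⟩
      rw [sub_sub_cancel, ZMod.val_cast_of_lt (by omega : t < l)]
      exact ht
  rw [himg, Finset.sum_image, ySum]
  intro a ha b hb h
  simp only [Finset.mem_coe, Finset.mem_range] at ha hb h
  have hab : (a : ZMod l) = b := by
    rw [← sub_sub_cancel i (a : ZMod l), h, sub_sub_cancel]
  exact cast_inj_of_lt (by omega) (by omega) hab


lemma comp_sum' (hl : 3 ≤ l) (i : ZMod l) :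
    ∑ j ∈ univ.filter (fun j : ZMod l => cd l (i + 1) j < cd l i j), compE G l v j =
      ySum G l v (l / 2) (i + ((l / 2 : ℕ) : ZMod l)) := by
  have himg : univ.filter (fun j : ZMod l => cd l (i + 1) j < cd l i j) =
      (Finset.range (l / 2)).image (fun u : ℕ => i - ((l - l / 2 + u : ℕ) : ZMod l)) := by
    ext j
    simp only [Finset.mem_filter, Finset.mem_univ, true_and, Finset.mem_image, Finset.mem_range]
    rw [comp_key' hl i j]
    constructor
    · intro h
      refine ⟨(i - j).val - (l - l / 2), by have := ZMod.val_lt (i - j); omega, ?_⟩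
      have he : l - l / 2 + ((i - j).val - (l - l / 2)) = (i - j).val := by omega
      rw [he, ZMod.natCast_zmod_val]; ring
    · rintro ⟨u, hu, rfl⟩
      rw [sub_sub_cancel, ZMod.val_cast_of_lt (by omega : l - l / 2 + u < l)]
      omega
  rw [himg, Finset.sum_image, ySum]
  · apply Finset.sum_congr rfl
    intro u hu
    congr 1
    have hc : ((l - l / 2 + u : ℕ) : ZMod l) = - ((l / 2 : ℕ) : ZMod l) + (u : ZMod l) := by
      push_cast [Nat.cast_sub (by omega : l / 2 ≤ l)]
      rw [ZMod.natCast_self]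
      ring
    rw [hc]
    ring
  · intro a ha b hb h
    simp only [Finset.mem_coe, Finset.mem_range] at ha hb h
    have hab : ((l - l / 2 + a : ℕ) : ZMod l) = ((l - l / 2 + b : ℕ) : ZMod l) := by
      rw [← sub_sub_cancel i (((l - l / 2 + a : ℕ) : ZMod l)), h, sub_sub_cancel]
    have := cast_inj_of_lt (by omega : l - l / 2 + a < l) (by omega : l - l / 2 + b < l) hab
    omega

end Filters

section Algebra
variable {l : ℕ}

lemma sum_range_cast {M : Type*} [AddCommMonoid M] [NeZero l] (f : ZMod l → M) :
    ∑ i ∈ Finset.range l, f (i : ZMod l) = ∑ i : ZMod l, f i := by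
  apply Finset.sum_nbij' (i := fun (t : ℕ) => (t : ZMod l)) (j := fun a : ZMod l => a.val)
  · intro a ha; exact Finset.mem_univ _
  · intro a ha; exact Finset.mem_range.mpr (ZMod.val_lt _)
  · intro a ha; exact ZMod.val_cast_of_lt (Finset.mem_range.mp ha)
  · intro a ha; exact ZMod.natCast_zmod_val _
  · intro a ha; rfl

lemma fVal_eq (hl : 3 ≤ l) (m : ℕ) :
    fVal m l = 2 * ((l / 2 : ℕ) : ℤ) * (m : ℤ) * ((l - 1 - l / 2 : ℕ) : ℤ) +
      (l : ℤ) * ((l - 1 - l / 2 : ℕ) : ℤ) ^ 2 := by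
  have hk1 : 1 ≤ l / 2 := by omega
  rcases Nat.mod_two_eq_zero_or_one l with h | h
  · have hc : (l - 1 - l / 2 : ℕ) = l / 2 - 1 := by omega
    rw [fVal, if_pos h, hc]
    have h1 : ((l / 2 - 1 : ℕ) : ℤ) = ((l / 2 : ℕ) : ℤ) - 1 := by
      rw [Nat.cast_sub hk1, Nat.cast_one]
    have h2 : (l : ℤ) = 2 * ((l / 2 : ℕ) : ℤ) := by
      have : l = 2 * (l / 2) := by omega
      exact_mod_cast congrArg (Nat.cast : ℕ → ℤ) this
    rw [h1, h2]; ring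
  · have hc : (l - 1 - l / 2 : ℕ) = l / 2 := by omega
    rw [fVal, if_neg (by omega), hc]
    have h2 : (l : ℤ) = 2 * ((l / 2 : ℕ) : ℤ) + 1 := by
      have : l = 2 * (l / 2) + 1 := by omega
      exact_mod_cast congrArg (Nat.cast : ℕ → ℤ) this
    rw [h2]; ring

end Algebra

section Windows
variable {V : Type*} [Fintype V] {G : SimpleGraph V} {l : ℕ} [NeZero l] {v : ZMod l → V}

lemma ySum_pos_elim {k : ℕ} {i : ZMod l} (h : ySum G l v k i ≠ 0) :
    ∃ t < k, compE G l v (i - (t : ZMod l)) ≠ 0 := by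
  by_contra hc
  push_neg at hc
  exact h (Finset.sum_eq_zero (fun t ht => hc t (Finset.mem_range.mp ht)))

lemma window1 (hl : 3 ≤ l)
    (hone : ∀ i j : ZMod l, 0 < compE G l v i → 0 < compE G l v j → i = j) (i : ZMod l) :
    ySum G l v (l / 2) i * ySum G l v (l / 2) (i + ((l / 2 : ℕ) : ZMod l)) = 0 := by
  by_contra h
  obtain ⟨h1, h2⟩ := Nat.mul_ne_zero_iff.mp h
  obtain ⟨t, ht, hct⟩ := ySum_pos_elim h1
  obtain ⟨u, hu, hcu⟩ := ySum_pos_elim h2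
  have heq : i - (t : ZMod l) = (i + ((l / 2 : ℕ) : ZMod l)) - (u : ZMod l) :=
    hone _ _ (Nat.pos_of_ne_zero hct) (Nat.pos_of_ne_zero hcu)
  have h5 : ((u : ℕ) : ZMod l) = ((t + l / 2 : ℕ) : ZMod l) := by
    push_cast
    linear_combination heq
  have := cast_inj_of_lt (by omega : u < l) (by omega : t + l / 2 < l) h5
  omega

lemma window_aux (hl : 3 ≤ l) {j j' : ZMod l}
    (hj : 0 < compE G l v j) (hj' : 0 < compE G l v j')
    (h1 : 1 ≤ (j' - j).val) (h2 : (j' - j).val ≤ l / 2) :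
    ySum G l v (l / 2) j * ySum G l v (l / 2) (j + ((l / 2 : ℕ) : ZMod l)) ≠ 0 := by
  apply Nat.mul_ne_zero
  · have hmem : (0 : ℕ) ∈ Finset.range (l / 2) := Finset.mem_range.mpr (by omega)
    have := Finset.single_le_sum (f := fun t : ℕ => compE G l v (j - (t : ZMod l)))
      (fun _ _ => Nat.zero_le _) hmem
    simp only [Nat.cast_zero, sub_zero] at this
    rw [ySum]
    omega
  · set s := (j' - j).val with hs
    have hmem : l / 2 - s ∈ Finset.range (l / 2) := Finset.mem_range.mpr (by omega)
    have hterm : (j + ((l / 2 : ℕ) : ZMod l)) - ((l / 2 - s : ℕ) : ZMod l) = j' := by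
      rw [Nat.cast_sub h2]
      have hsz : ((s : ℕ) : ZMod l) = j' - j := ZMod.natCast_zmod_val _
      rw [hsz]; ring
    have := Finset.single_le_sum
      (f := fun t : ℕ => compE G l v ((j + ((l / 2 : ℕ) : ZMod l)) - (t : ZMod l)))
      (fun _ _ => Nat.zero_le _) hmem
    have h6 : compE G l v j' ≤ ySum G l v (l / 2) (j + ((l / 2 : ℕ) : ZMod l)) := by
      rw [ySum, ← hterm]
      exact this
    omega

lemma window2 (hl : 3 ≤ l)
    (hzero : ∀ i : ZMod l,
      ySum G l v (l / 2) i * ySum G l v (l / 2) (i + ((l / 2 : ℕ) : ZMod l)) = 0) :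
    ∀ i j : ZMod l, 0 < compE G l v i → 0 < compE G l v j → i = j := by
  intro i j hi hj
  by_contra hne
  have hsub : j - i ≠ 0 := sub_ne_zero_of_ne (Ne.symm hne)
  have hval : (j - i).val ≠ 0 := fun h => hsub (by rwa [← ZMod.val_eq_zero])
  rcases le_or_gt ((j - i).val) (l / 2) with h | h
  · exact window_aux hl hi hj (by omega) h (hzero i)
  · have hneg : (i - j).val = l - (j - i).val := by
      rw [show i - j = -(j - i) by ring, ZMod.neg_val, if_neg hsub]
    have hlt : (j - i).val < l := ZMod.val_lt _
    exact window_aux hl hj hi (by omega) (by omega) (hzero j)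

end Windows

/-- Let `G` be a connected graph containing a cycle `C_l = v₀v₁⋯v_{l-1}v₀`
(`l ≥ 3`) such that `G - E(C_l)` has exactly `l` components `G₀,…,G_{l-1}` with
`vᵢ ∈ Gᵢ`.  With `mᵢ = |E(Gᵢ)|`, `m = Σ mᵢ` and `eᵢ = vᵢv_{i+1}`, one has
`Σᵢ m_{vᵢ}(eᵢ|G)·m_{v_{i+1}}(eᵢ|G) ≥ f(m,l)`, with equality iff at most one of
the `mᵢ` is positive. -/
theorem szM_cycle_sum_lower_bound {V : Type*} [Fintype V] (G : SimpleGraph V)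
    (l : ℕ) (h3 : 3 ≤ l) (v : ZMod l → V)
    (hinj : Function.Injective v) (hconn : G.Connected)
    (hadj : ∀ i : ZMod l, G.Adj (v i) (v (i + 1)))
    (hcover : ∀ w : V, ∃ i : ZMod l, (offCycle G l v).Reachable (v i) w)
    (hsep : ∀ i j : ZMod l, (offCycle G l v).Reachable (v i) (v j) → i = j) :
    fVal (totE G l v) l ≤
      ∑ i ∈ Finset.range l,
        (szM G (v i) (v (i + 1)) * szM G (v (i + 1)) (v i) : ℤ) ∧
    (∑ i ∈ Finset.range l,
        (szM G (v i) (v (i + 1)) * szM G (v (i + 1)) (v i) : ℤ) =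
          fVal (totE G l v) l ↔
      ∀ i j : ZMod l, 0 < compE G l v i → 0 < compE G l v j → i = j) := by
  haveI : NeZero l := ⟨by omega⟩
  obtain ⟨idx, hidx⟩ : ∃ idx : V → ZMod l,
      ∀ w, (offCycle G l v).Reachable (v (idx w)) w :=
    ⟨fun w => (hcover w).choose, fun w => (hcover w).choose_spec⟩
  set m : ℕ := ∑ j : ZMod l, compE G l v j with hmdef
  have hm : totE G l v = m := by
    rw [totE]; exact sum_range_cast (fun j => compE G l v j)
  have hs1 : ∀ i : ZMod l, szM G (v i) (v (i + 1)) =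
      (l - 1 - l / 2) + ySum G l v (l / 2) i := by
    intro i
    rw [szM_formula h3 hconn hinj hadj hsep hidx i (i + 1), cyc_count h3 i, comp_sum h3 i]
  have hs2 : ∀ i : ZMod l, szM G (v (i + 1)) (v i) =
      (l - 1 - l / 2) + ySum G l v (l / 2) (i + ((l / 2 : ℕ) : ZMod l)) := by
    intro i
    rw [szM_formula h3 hconn hinj hadj hsep hidx (i + 1) i, cyc_count' h3 i, comp_sum' h3 i]
  have hYsum : ∑ i : ZMod l, ySum G l v (l / 2) i = (l / 2) * m := by
    calc ∑ i : ZMod l, ySum G l v (l / 2) i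
        = ∑ i : ZMod l, ∑ t ∈ Finset.range (l / 2), compE G l v (i - (t : ZMod l)) := rfl
      _ = ∑ t ∈ Finset.range (l / 2), ∑ i : ZMod l, compE G l v (i - (t : ZMod l)) :=
          Finset.sum_comm
      _ = ∑ _t ∈ Finset.range (l / 2), m := by
          apply Finset.sum_congr rfl
          intro t _
          exact Fintype.sum_equiv (Equiv.subRight ((t : ℕ) : ZMod l)) _ _ (fun i => rfl)
      _ = (l / 2) * m := by rw [Finset.sum_const, Finset.card_range, smul_eq_mul]
  have hY'sum : ∑ i : ZMod l, ySum G l v (l / 2) (i + ((l / 2 : ℕ) : ZMod l)) = (l / 2) * m := by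
    rw [← hYsum]
    exact Fintype.sum_equiv (Equiv.addRight ((l / 2 : ℕ) : ZMod l)) _ _ (fun i => rfl)
  have hcard : (Finset.univ : Finset (ZMod l)).card = l := by
    rw [Finset.card_univ, ZMod.card]
  have hT : ∑ i ∈ Finset.range l,
      (szM G (v i) (v (i + 1)) * szM G (v (i + 1)) (v i) : ℤ) =
      fVal m l + ∑ i : ZMod l,
        ((ySum G l v (l / 2) i * ySum G l v (l / 2) (i + ((l / 2 : ℕ) : ZMod l)) : ℕ) : ℤ) := by
    rw [sum_range_cast (fun i : ZMod l =>
      (szM G (v i) (v (i + 1)) * szM G (v (i + 1)) (v i) : ℤ))]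
    have step : ∀ i : ZMod l,
        (szM G (v i) (v (i + 1)) * szM G (v (i + 1)) (v i) : ℤ) =
        ((ySum G l v (l / 2) i * ySum G l v (l / 2) (i + ((l / 2 : ℕ) : ZMod l)) : ℕ) : ℤ)
        + (((l - 1 - l / 2 : ℕ) : ℤ) * ((ySum G l v (l / 2) i : ℕ) : ℤ)
        + ((l - 1 - l / 2 : ℕ) : ℤ) *
            ((ySum G l v (l / 2) (i + ((l / 2 : ℕ) : ZMod l)) : ℕ) : ℤ)
        + ((l - 1 - l / 2 : ℕ) : ℤ) * ((l - 1 - l / 2 : ℕ) : ℤ)) := by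
      intro i; rw [hs1 i, hs2 i]; push_cast; ring
    rw [Finset.sum_congr rfl (fun i _ => step i)]
    rw [Finset.sum_add_distrib, Finset.sum_add_distrib, Finset.sum_add_distrib]
    rw [← Finset.mul_sum, ← Finset.mul_sum, Finset.sum_const, hcard]
    have c1 : ∑ i : ZMod l, ((ySum G l v (l / 2) i : ℕ) : ℤ) = (((l / 2) * m : ℕ) : ℤ) := by
      rw [← Nat.cast_sum, hYsum]
    have c2 : ∑ i : ZMod l,
        ((ySum G l v (l / 2) (i + ((l / 2 : ℕ) : ZMod l)) : ℕ) : ℤ) = (((l / 2) * m : ℕ) : ℤ) := by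
      rw [← Nat.cast_sum, hY'sum]
    rw [c1, c2, fVal_eq h3 m]
    push_cast
    ring
  rw [hm]
  have hSnonneg : 0 ≤ ∑ i : ZMod l,
      ((ySum G l v (l / 2) i * ySum G l v (l / 2) (i + ((l / 2 : ℕ) : ZMod l)) : ℕ) : ℤ) :=
    Finset.sum_nonneg (fun i _ => Int.natCast_nonneg _)
  constructor
  · rw [hT]
    exact le_add_of_nonneg_right hSnonneg
  · rw [hT]
    constructor
    · intro heq
      have hS : ∑ i : ZMod l,
          ((ySum G l v (l / 2) i * ySum G l v (l / 2) (i + ((l / 2 : ℕ) : ZMod l)) : ℕ) : ℤ)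
            = 0 := by linarith
      have hSn : ∑ i : ZMod l,
          (ySum G l v (l / 2) i * ySum G l v (l / 2) (i + ((l / 2 : ℕ) : ZMod l))) = 0 := by
        rw [← Nat.cast_sum] at hS
        exact_mod_cast hS
      have hall := Finset.sum_eq_zero_iff.mp hSn
      exact window2 h3 (fun i => hall i (Finset.mem_univ i))
    · intro hone
      have hz : ∀ i : ZMod l,
          ySum G l v (l / 2) i * ySum G l v (l / 2) (i + ((l / 2 : ℕ) : ZMod l)) = 0 :=
        window1 h3 hone
      rw [Finset.sum_congr rfl (fun i _ => by rw [hz i, Nat.cast_zero])]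
      simp
end
end
end
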